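/- arXiv:2601.00165 — 6 statements merged into one kernel-verified Lean document; each statement's English description precedes it below -/
import Mathlib

section
/- For an odd prime p, the complete graph on the elements of the finite field F_{p^2} can be partitioned into (p^2-1)/4 edge-disjoint subgraphs, each isomorphic to the torus grid graph C_p □ C_p. -/
open SimpleGraph

section TorusDesign

variable {K : Type} [Field K]

/-- membership of `d` in the connection set `{a, -a, c/a, -c/a}`. -/
def torusR (c a d : K) : Prop := d = a ∨ d = -a ∨ a * d = c ∨ a * d = -c

theorem torusR_neg {c a d : K} (h : torusR c a d) : torusR c a (-d) := by
  rcases h with h | h | h | h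
  · exact Or.inr (Or.inl (by rw [h]))
  · exact Or.inl (by rw [h, neg_neg])
  · exact Or.inr (Or.inr (Or.inr (by rw [mul_neg, h])))
  · exact Or.inr (Or.inr (Or.inl (by rw [mul_neg, h, neg_neg])))

/-- The Cayley-type graph on `K` with connection set `{a, -a, c/a, -c/a}`. -/
def torusCay (c a : K) : SimpleGraph K where
  Adj x y := x ≠ y ∧ torusR c a (x - y)
  symm := by
    refine ⟨?_⟩
    rintro x y ⟨hne, hr⟩
    exact ⟨hne.symm, by rw [← neg_sub]; exact torusR_neg hr⟩
  loopless := ⟨fun x h => h.1 rfl⟩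

/-- Orbit equivalence of the Klein action `a ↦ -a`, `a ↦ c/a` on nonzero elements. -/
def torusSetoid (c : K) : Setoid {x : K // x ≠ 0} where
  r a d := torusR c a.1 d.1
  iseqv := by
    constructor
    · intro a; exact Or.inl rfl
    · rintro ⟨a, ha⟩ ⟨b, hb⟩ (h | h | h | h)
      · exact Or.inl h.symm
      · exact Or.inr (Or.inl (by rw [h, neg_neg]))
      · exact Or.inr (Or.inr (Or.inl (by rw [mul_comm]; exact h)))
      · exact Or.inr (Or.inr (Or.inr (by rw [mul_comm]; exact h)))
    · rintro ⟨a, ha⟩ ⟨b, hb⟩ ⟨d, hd⟩ h1 h2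
      rcases h1 with h1 | h1 | h1 | h1
      · subst h1; exact h2
      · subst h1
        rcases h2 with h2 | h2 | h2 | h2
        · exact Or.inr (Or.inl h2)
        · exact Or.inl (by rw [h2, neg_neg])
        · exact Or.inr (Or.inr (Or.inr (by linear_combination -h2)))
        · exact Or.inr (Or.inr (Or.inl (by linear_combination -h2)))
      · rcases h2 with h2 | h2 | h2 | h2
        · exact Or.inr (Or.inr (Or.inl (by rw [h2]; exact h1)))
        · exact Or.inr (Or.inr (Or.inr (by rw [h2, mul_neg, h1])))
        · exact Or.inl (mul_left_cancel₀ hb (by rw [h2, ← h1]; ring))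
        · exact Or.inr (Or.inl (mul_left_cancel₀ hb (by rw [h2, ← h1]; ring)))
      · rcases h2 with h2 | h2 | h2 | h2
        · exact Or.inr (Or.inr (Or.inr (by rw [h2]; exact h1)))
        · exact Or.inr (Or.inr (Or.inl (by rw [h2, mul_neg, h1, neg_neg])))
        · exact Or.inr (Or.inl (mul_left_cancel₀ hb (by rw [h2]; linear_combination h1)))
        · exact Or.inl (mul_left_cancel₀ hb (by rw [h2]; linear_combination -h1))

theorem torusR_iff_mem {c a : K} (ha : a ≠ 0) (d : K) :
    torusR c a d ↔ d = a ∨ d = -a ∨ d = a⁻¹ * c ∨ d = -(a⁻¹ * c) := by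
  have h3 : a * d = c ↔ d = a⁻¹ * c := (eq_inv_mul_iff_mul_eq₀ ha).symm
  have h4 : a * d = -c ↔ d = -(a⁻¹ * c) := by
    rw [← eq_inv_mul_iff_mul_eq₀ ha, mul_neg]
  unfold torusR; rw [h3, h4]

theorem torusR_ne_zero {c : K} (hc0 : c ≠ 0) {a : K} (ha : a ≠ 0) {d : K}
    (h : torusR c a d) : d ≠ 0 := by
  rintro rfl
  rcases h with h | h | h | h
  · exact ha h.symm
  · exact ha (neg_eq_zero.mp h.symm)
  · exact hc0 (by rw [← h, mul_zero])
  · exact hc0 (neg_eq_zero.mp (by rw [← h, mul_zero]))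

theorem torus_card [Finite K] (c : K) (hc : ¬ IsSquare c) (hc' : ¬ IsSquare (-c))
    (h2 : (2:K) ≠ 0) :
    4 * Nat.card (Quotient (torusSetoid c)) = Nat.card K - 1 := by
  classical
  cases nonempty_fintype K
  have hc0 : c ≠ 0 := fun h => hc ⟨0, by rw [h, mul_zero]⟩
  have key : ∀ q : Quotient (torusSetoid c),
      Fintype.card {s : {x : K // x ≠ 0} // ⟦s⟧ = q} = 4 := by
    intro q
    set a : {x : K // x ≠ 0} := q.out with haq
    have ha : a.1 ≠ 0 := a.2
    set b : K := (a.1)⁻¹ * c with hbdef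
    have hb : b ≠ 0 := mul_ne_zero (inv_ne_zero ha) hc0
    have e1 : {s : {x : K // x ≠ 0} // ⟦s⟧ = q} ≃
        {s : {x : K // x ≠ 0} // (torusSetoid c).r a s} := by
      apply Equiv.subtypeEquivRight
      intro s
      rw [← Quotient.out_eq q, Quotient.eq]
      exact ⟨fun h => (torusSetoid c).symm h, fun h => (torusSetoid c).symm h⟩
    have e2 : {s : {x : K // x ≠ 0} // (torusSetoid c).r a s} ≃
        {x : K // x ≠ 0 ∧ torusR c a.1 x} :=
      Equiv.subtypeSubtypeEquivSubtypeInter (fun x : K => x ≠ 0) (torusR c a.1)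
    have e3 : {x : K // x ≠ 0 ∧ torusR c a.1 x} ≃ {x : K // torusR c a.1 x} :=
      Equiv.subtypeEquivRight fun x =>
        ⟨fun h => h.2, fun h => ⟨torusR_ne_zero hc0 ha h, h⟩⟩
    have e4 : {x : K // torusR c a.1 x} ≃
        {x : K // x ∈ ({a.1, -a.1, b, -b} : Finset K)} :=
      Equiv.subtypeEquivRight fun x => by
        rw [torusR_iff_mem ha]; simp [hbdef]
    rw [Fintype.card_congr (((e1.trans e2).trans e3).trans e4), Fintype.card_coe]
    have haa : a.1 ≠ -a.1 := by
      intro h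
      apply ha
      have : (2:K) * a.1 = 0 := by linear_combination h
      rcases mul_eq_zero.mp this with h' | h'
      · exact absurd h' h2
      · exact h'
    have hab : a.1 ≠ b := fun h => hc ⟨a.1, by rw [hbdef] at h; field_simp at h; linear_combination -h⟩
    have hab' : a.1 ≠ -b := fun h => hc' ⟨a.1, by rw [hbdef] at h; field_simp at h; linear_combination -h⟩
    have hna : -a.1 ≠ b := fun h => hc' ⟨a.1, by rw [hbdef] at h; field_simp at h; linear_combination h⟩
    have hnb : -a.1 ≠ -b := fun h => hab (neg_injective h)
    have hbb : b ≠ -b := by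
      intro h
      apply hb
      have : (2:K) * b = 0 := by linear_combination h
      rcases mul_eq_zero.mp this with h' | h'
      · exact absurd h' h2
      · exact h'
    rw [Finset.card_insert_of_notMem (by simp [haa, hab, hab']),
        Finset.card_insert_of_notMem (by simp [hna, hnb]),
        Finset.card_insert_of_notMem (by simp [hbb]),
        Finset.card_singleton]
  have hsigma : Fintype.card {x : K // x ≠ 0} =
      ∑ q : Quotient (torusSetoid c), Fintype.card {s : {x : K // x ≠ 0} // ⟦s⟧ = q} := by
    rw [← Fintype.card_sigma]
    exact (Fintype.card_congr (Equiv.sigmaFiberEquiv _)).symm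
  have hS : Fintype.card {x : K // x ≠ 0} = Fintype.card K - 1 := by
    rw [Fintype.card_subtype_compl (p := fun x : K => x = 0), Fintype.card_subtype_eq]
  simp only [key, Finset.sum_const, smul_eq_mul, Finset.card_univ] at hsigma
  simp only [← Nat.card_eq_fintype_card] at hsigma hS ⊢
  omega

end TorusDesign

/-- the identity, as a map from `Fin (n+2)` to `ZMod (n+2)`. -/
def finToZMod {n : ℕ} (x : Fin (n + 2)) : ZMod (n + 2) := x

theorem torus_indep (n : ℕ) [Fact (Nat.Prime (n+2))] {K : Type} [Field K] [Fintype K]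
    [Algebra (ZMod (n+2)) K] (hcard : Fintype.card K = (n+2)^2) (hodd : Odd (n+2))
    (c a : K) (hc : ¬ IsSquare c) (ha : a ≠ 0) :
    ∀ m k : ZMod (n+2), m • a + k • (a⁻¹ * c) = 0 → m = 0 ∧ k = 0 := by
  haveI : Fact (1 < n + 2) := ⟨by omega⟩
  have hc0 : c ≠ 0 := fun h => hc ⟨0, by rw [h, mul_zero]⟩
  have halg : Function.Injective (algebraMap (ZMod (n+2)) K) :=
    (algebraMap (ZMod (n+2)) K).injective
  haveI : NoZeroSMulDivisors (ZMod (n+2)) K :=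
    by have := Module.isTorsionFree_iff_algebraMap_injective.mpr halg; infer_instance
  haveI : CharP K (n+2) := charP_of_injective_algebraMap halg (n+2)
  have hchar : ringChar K ≠ 2 := by
    have h1 : ringChar K = n + 2 := ringChar.eq K (n+2)
    obtain ⟨t, ht⟩ := hodd
    omega
  intro m k h
  by_cases hk : k = 0
  · subst hk
    rw [zero_smul, add_zero] at h
    rcases smul_eq_zero.mp h with h' | h'
    · exact ⟨h', rfl⟩
    · exact absurd h' ha
  · exfalso
    set b : K := a⁻¹ * c with hbdef
    set z : ZMod (n+2) := -(k⁻¹ * m) with hz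
    have hbz : b = z • a := by
      have h' : k • b = -(m • a) := eq_neg_of_add_eq_zero_right h
      have h'' : b = k⁻¹ • (k • b) := (inv_smul_smul₀ hk b).symm
      rw [h', smul_neg, smul_smul, ← neg_smul] at h''
      exact h''
    have hceq : c = algebraMap (ZMod (n+2)) K z * (a * a) := by
      have : c = a * b := by rw [hbdef]; field_simp
      rw [this, hbz, Algebra.smul_def]; ring
    have hz0 : z ≠ 0 := by
      intro h0
      rw [h0, map_zero, zero_mul] at hceq
      exact hc0 hceq
    set w : K := algebraMap (ZMod (n+2)) K z with hw
    have hw0 : w ≠ 0 := fun h0 => hz0 (halg (by rw [← hw, h0, map_zero]))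
    have hwp : w ^ (n+2) = w := by rw [hw, ← map_pow, ZMod.pow_card]
    have hw1 : w ^ (n+1) = 1 := by
      have h1 : w ^ (n+1) * w = 1 * w := by rw [← pow_succ, hwp, one_mul]
      exact mul_right_cancel₀ hw0 h1
    have hsq : IsSquare w := by
      rw [FiniteField.isSquare_iff hchar hw0, hcard]
      obtain ⟨t, ht⟩ := hodd
      have e1 : (n+2)^2 = 4*(t*t)+4*t+1 := by rw [ht]; ring
      have e2 : (n+2)^2 / 2 = (n+1) * ((n+3)/2) := by
        have e3 : n + 1 = 2*t := by omega
        have e4 : (n+3)/2 = t+1 := by omega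
        rw [e1, e3, e4]
        have e5 : 2*t*(t+1) = 2*(t*t) + 2*t := by ring
        rw [e5]
        generalize t*t = T
        omega
      rw [e2, pow_mul, hw1, one_pow]
    obtain ⟨t, ht⟩ := hsq
    exact hc ⟨t * a, by rw [hceq, ht]; ring⟩
set_option maxHeartbeats 1000000 in
theorem torus_iso (n : ℕ) {K : Type} [Field K] [Fintype K] [Algebra (ZMod (n+2)) K]
    (hcard : Fintype.card K = (n+2)^2) (c a : K) (ha : a ≠ 0) (hc0 : c ≠ 0)
    (hind : ∀ m k : ZMod (n+2), m • a + k • (a⁻¹ * c) = 0 → m = 0 ∧ k = 0) :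
    Nonempty (torusCay c a ≃g (cycleGraph (n+2) □ cycleGraph (n+2))) := by
  haveI : Fact (1 < n + 2) := ⟨by omega⟩
  set b : K := a⁻¹ * c with hbdef
  have hb : b ≠ 0 := mul_ne_zero (inv_ne_zero ha) hc0
  set φ : Fin (n+2) × Fin (n+2) → K :=
    fun x => finToZMod x.1 • a + finToZMod x.2 • b with hφ
  have hcoeff : ∀ m k m' k' : ZMod (n+2), m • a + k • b = m' • a + k' • b ↔ m = m' ∧ k = k' := by
    intro m k m' k'
    constructor
    · intro h
      have h0 : (m - m') • a + (k - k') • b = 0 := by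
        have hee : (m - m') • a + (k - k') • b = (m • a + k • b) - (m' • a + k' • b) := by
          rw [sub_smul, sub_smul]; abel
        rw [hee, h, sub_self]
      obtain ⟨h1, h2⟩ := hind _ _ h0
      exact ⟨sub_eq_zero.mp h1, sub_eq_zero.mp h2⟩
    · rintro ⟨rfl, rfl⟩; rfl
  have hinj : Function.Injective φ := by
    intro u v h
    obtain ⟨h1, h2⟩ := (hcoeff _ _ _ _).mp h
    exact Prod.ext h1 h2
  have hbij : Function.Bijective φ := by
    rw [Fintype.bijective_iff_injective_and_card]
    refine ⟨hinj, ?_⟩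
    simp [hcard, pow_two]
  set eqv : (Fin (n+2) × Fin (n+2)) ≃ K := Equiv.ofBijective φ hbij with heqv
  have hone : (1 : ZMod (n+2)) ≠ 0 := one_ne_zero
  have hnegone : (-1 : ZMod (n+2)) ≠ 0 := neg_ne_zero.mpr one_ne_zero
  have hR : ∀ m k : ZMod (n+2), torusR c a (m • a + k • b) ↔
      ((m = 1 ∧ k = 0) ∨ (m = -1 ∧ k = 0)) ∨ ((m = 0 ∧ k = 1) ∨ (m = 0 ∧ k = -1)) := by
    intro m k
    have e1 : m • a + k • b = a ↔ m = 1 ∧ k = 0 := by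
      have := hcoeff m k 1 0
      rwa [one_smul, zero_smul, add_zero] at this
    have e2 : m • a + k • b = -a ↔ m = -1 ∧ k = 0 := by
      have := hcoeff m k (-1) 0
      rwa [neg_smul, one_smul, zero_smul, add_zero] at this
    have e3 : a * (m • a + k • b) = c ↔ m = 0 ∧ k = 1 := by
      rw [← eq_inv_mul_iff_mul_eq₀ ha, ← hbdef]
      have := hcoeff m k 0 1
      rwa [one_smul, zero_smul, zero_add] at this
    have e4 : a * (m • a + k • b) = -c ↔ m = 0 ∧ k = -1 := by
      rw [← eq_inv_mul_iff_mul_eq₀ ha, mul_neg, ← hbdef]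
      have := hcoeff m k 0 (-1)
      rwa [neg_smul, one_smul, zero_smul, zero_add] at this
    unfold torusR
    rw [e1, e2, e3, e4]
    exact or_assoc.symm
  have cyc_adj : ∀ x y : Fin (n+2), (cycleGraph (n+2)).Adj x y ↔
      (finToZMod x - finToZMod y = 1 ∨ finToZMod x - finToZMod y = -1) := by
    intro x y
    rw [cycleGraph_adj]
    constructor
    · rintro (h | h)
      · exact Or.inl h
      · right
        have h' : finToZMod y - finToZMod x = 1 := h
        linear_combination -h'
    · rintro (h | h)
      · exact Or.inl h
      · right
        show finToZMod y - finToZMod x = 1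
        linear_combination -h
  have heq2 : ∀ x y : Fin (n+2), x = y ↔ finToZMod x - finToZMod y = 0 := by
    intro x y
    constructor
    · rintro rfl; exact sub_self _
    · intro h
      exact sub_eq_zero.mp h
  have key : ∀ u v : Fin (n+2) × Fin (n+2),
      (torusCay c a).Adj (φ u) (φ v) ↔
        (cycleGraph (n+2) □ cycleGraph (n+2)).Adj u v := by
    intro u v
    have hsub : φ u - φ v =
        (finToZMod u.1 - finToZMod v.1) • a + (finToZMod u.2 - finToZMod v.2) • b := by
      rw [sub_smul, sub_smul, hφ]; dsimp only; abel
    set m : ZMod (n+2) := finToZMod u.1 - finToZMod v.1 with hm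
    set k : ZMod (n+2) := finToZMod u.2 - finToZMod v.2 with hk
    have hAdj : (torusCay c a).Adj (φ u) (φ v) ↔
        ((m = 1 ∧ k = 0) ∨ (m = -1 ∧ k = 0)) ∨ ((m = 0 ∧ k = 1) ∨ (m = 0 ∧ k = -1)) := by
      constructor
      · rintro ⟨hne, hr⟩
        rw [hsub] at hr
        exact (hR _ _).mp hr
      · intro h
        refine ⟨fun heq => ?_, by rw [hsub]; exact (hR _ _).mpr h⟩
        have huv : u = v := hinj heq
        have hm0 : m = 0 := by rw [hm, huv, sub_self]
        have hk0 : k = 0 := by rw [hk, huv, sub_self]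
        rcases h with (⟨h1, _⟩ | ⟨h1, _⟩) | (⟨_, h2⟩ | ⟨_, h2⟩)
        · exact hone (h1 ▸ hm0)
        · exact hnegone (h1 ▸ hm0)
        · exact hone (h2 ▸ hk0)
        · exact hnegone (h2 ▸ hk0)
    rw [hAdj, boxProd_adj, cyc_adj, cyc_adj, heq2 u.1 v.1, heq2 u.2 v.2, ← hm, ← hk]
    constructor
    · rintro ((⟨h1, h2⟩ | ⟨h1, h2⟩) | (⟨h1, h2⟩ | ⟨h1, h2⟩))
      · exact Or.inl ⟨Or.inl h1, h2⟩
      · exact Or.inl ⟨Or.inr h1, h2⟩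
      · exact Or.inr ⟨Or.inl h2, h1⟩
      · exact Or.inr ⟨Or.inr h2, h1⟩
    · rintro (⟨h1 | h1, h2⟩ | ⟨h1 | h1, h2⟩)
      · exact Or.inl (Or.inl ⟨h1, h2⟩)
      · exact Or.inl (Or.inr ⟨h1, h2⟩)
      · exact Or.inr (Or.inl ⟨h2, h1⟩)
      · exact Or.inr (Or.inr ⟨h2, h1⟩)
  refine ⟨⟨eqv.symm, ?_⟩⟩
  intro x y
  have hkey := key (eqv.symm x) (eqv.symm y)
  have hx : φ (eqv.symm x) = x := eqv.apply_symm_apply x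
  have hy : φ (eqv.symm y) = y := eqv.apply_symm_apply y
  rw [hx, hy] at hkey
  exact hkey.symm

set_option maxHeartbeats 1000000 in
theorem torus_design_prime (p : ℕ) [Fact p.Prime] (hodd : Odd p) :
    ∃ f : Fin ((p ^ 2 - 1) / 4) → SimpleGraph (GaloisField p 2),
      (∀ i, Nonempty (f i ≃g (SimpleGraph.cycleGraph p □ SimpleGraph.cycleGraph p))) ∧
      (Pairwise fun i j => Disjoint (f i) (f j)) ∧
      (⨆ i, f i) = ⊤ := by
  have hp := (Fact.out : p.Prime)
  obtain ⟨n, rfl⟩ : ∃ n, p = n + 2 := ⟨p - 2, by have := hp.two_le; omega⟩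
  set K := GaloisField (n+2) 2 with hK
  letI : Fintype K := Fintype.ofFinite K
  have hcard : Fintype.card K = (n+2)^2 := by
    rw [← Nat.card_eq_fintype_card, hK, GaloisField.card]
    norm_num
  have h2K : (2 : K) ≠ 0 := by
    have h := CharP.cast_eq_zero_iff K (n+2) 2
    intro h0
    have : ((2:ℕ) : K) = 0 := by exact_mod_cast h0
    have hd : (n+2) ∣ 2 := h.mp this
    have hle := Nat.le_of_dvd (by norm_num) hd
    obtain ⟨t, ht⟩ := hodd
    omega
  have hchar : ringChar K ≠ 2 := by
    have h1 : ringChar K = n + 2 := ringChar.eq K (n+2)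
    obtain ⟨t, ht⟩ := hodd
    omega
  obtain ⟨c, hc⟩ := FiniteField.exists_nonsquare hchar
  have hc0 : c ≠ 0 := fun h => hc ⟨0, by rw [h, mul_zero]⟩
  have hneg1 : IsSquare (-1 : K) := by
    rw [FiniteField.isSquare_neg_one_iff, hcard]
    obtain ⟨t, ht⟩ := hodd
    have e1 : (n+2)^2 = 4*(t*t)+4*t+1 := by rw [ht]; ring
    rw [e1]
    generalize t*t = T
    omega
  have hc' : ¬ IsSquare (-c) := by
    rintro ⟨t, ht⟩
    obtain ⟨s, hs⟩ := hneg1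
    exact hc ⟨s * t, by linear_combination -ht + t*t*hs⟩
  have hQcard : Nat.card (Quotient (torusSetoid c)) = ((n+2)^2 - 1)/4 := by
    have h4 := torus_card c hc hc' h2K
    have hKn : Nat.card K = (n+2)^2 := by rw [Nat.card_eq_fintype_card, hcard]
    rw [hKn] at h4
    omega
  have e : Quotient (torusSetoid c) ≃ Fin (((n+2)^2 - 1)/4) :=
    Finite.equivFinOfCardEq hQcard
  refine ⟨fun i => torusCay c ((e.symm i).out).1, ?_, ?_, ?_⟩
  · intro i
    exact torus_iso n hcard c _ (e.symm i).out.2 hc0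
      (torus_indep n hcard hodd c _ hc (e.symm i).out.2)
  · intro i j hij
    rw [disjoint_iff]
    ext x y
    simp only [SimpleGraph.inf_adj, SimpleGraph.bot_adj, iff_false, not_and]
    rintro ⟨hxy, h1⟩ ⟨-, h2⟩
    have hd : x - y ≠ 0 := sub_ne_zero.mpr hxy
    have q1 : (⟦(e.symm i).out⟧ : Quotient (torusSetoid c)) = ⟦⟨x - y, hd⟩⟧ :=
      Quotient.sound h1
    have q2 : (⟦(e.symm j).out⟧ : Quotient (torusSetoid c)) = ⟦⟨x - y, hd⟩⟧ :=
      Quotient.sound h2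
    rw [Quotient.out_eq] at q1 q2
    exact hij (e.symm.injective (q1.trans q2.symm))
  · ext x y
    simp only [SimpleGraph.iSup_adj, SimpleGraph.top_adj]
    constructor
    · rintro ⟨i, hi⟩
      exact hi.1
    · intro hxy
      have hd : x - y ≠ 0 := sub_ne_zero.mpr hxy
      refine ⟨e ⟦⟨x - y, hd⟩⟧, hxy, ?_⟩
      rw [Equiv.symm_apply_apply]
      exact @Quotient.mk_out _ (torusSetoid c) ⟨x - y, hd⟩
end

section
/- For an odd prime p, the complete graph K_{p^4} can be partitioned into (p^4-1)/4 edge-disjoint subgraphs each isomorphic to C_{p^2} □ C_{p^2}. -/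
open SimpleGraph

namespace TorusDesign

/-- Tensor (categorical) product of simple graphs. -/
def tensG {α β : Type*} (G : SimpleGraph α) (H : SimpleGraph β) : SimpleGraph (α × β) where
  Adj a b := G.Adj a.1 b.1 ∧ H.Adj a.2 b.2
  symm := ⟨fun a b h => ⟨h.1.symm, h.2.symm⟩⟩
  loopless := ⟨fun a h => G.loopless.irrefl a.1 h.1⟩

@[simp] lemma tensG_adj {α β : Type*} (G : SimpleGraph α) (H : SimpleGraph β)
    (a b : α × β) : (tensG G H).Adj a b ↔ G.Adj a.1 b.1 ∧ H.Adj a.2 b.2 := Iff.rfl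

section Walecki

variable (m : ℕ) [NeZero m]

instance : NeZero (2*m) := ⟨by have := NeZero.ne m; omega⟩
instance : NeZero (2*m+1) := ⟨by omega⟩
instance fact_one_lt : Fact (1 < 2*m+1) := ⟨by have := NeZero.ne m; omega⟩

/-- The zig-zag sequence 0, 1, -1, 2, -2, ... in `ZMod (2*m)`. -/
def zig (j : ℕ) : ZMod (2*m) :=
  if j % 2 = 0 then -((j/2 : ℕ) : ZMod (2*m)) else ((j/2 + 1 : ℕ) : ZMod (2*m))

lemma zig_even (t : ℕ) : zig m (2*t) = -((t : ℕ) : ZMod (2*m)) := by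
  simp [zig, Nat.mul_div_cancel_left, Nat.mul_mod_right]

lemma zig_odd (t : ℕ) : zig m (2*t+1) = ((t + 1 : ℕ) : ZMod (2*m)) := by
  have h1 : (2*t+1) % 2 = 1 := by omega
  have h2 : (2*t+1) / 2 = t := by omega
  simp [zig, h1, h2]

lemma cast_inj_of_lt {a b : ℕ} (ha : a < 2*m) (hb : b < 2*m)
    (h : (a : ZMod (2*m)) = (b : ZMod (2*m))) : a = b := by
  have := congrArg ZMod.val h
  rwa [ZMod.val_cast_of_lt ha, ZMod.val_cast_of_lt hb] at this

lemma cast_ne_zero_of_lt {a : ℕ} (h0 : 0 < a) (ha : a < 2*m) :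
    (a : ZMod (2*m)) ≠ 0 := by
  intro h
  have := (ZMod.natCast_eq_zero_iff a (2*m)).1 h
  have := Nat.le_of_dvd h0 this
  omega

lemma zig_inj {j1 j2 : ℕ} (h1 : j1 < 2*m) (h2 : j2 < 2*m)
    (h : zig m j1 = zig m j2) : j1 = j2 := by
  obtain ⟨t1, rfl | rfl⟩ : ∃ t, j1 = 2*t ∨ j1 = 2*t+1 := ⟨j1/2, by omega⟩ <;>
  obtain ⟨t2, rfl | rfl⟩ : ∃ t, j2 = 2*t ∨ j2 = 2*t+1 := ⟨j2/2, by omega⟩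
  · rw [zig_even, zig_even, neg_inj] at h
    have := cast_inj_of_lt m (by omega) (by omega) h; omega
  · rw [zig_even, zig_odd] at h
    have : ((t1 + (t2+1) : ℕ) : ZMod (2*m)) = 0 := by
      push_cast at h ⊢; rw [← h]; ring
    exact absurd this (cast_ne_zero_of_lt m (by omega) (by omega))
  · rw [zig_odd, zig_even] at h
    have : ((t2 + (t1+1) : ℕ) : ZMod (2*m)) = 0 := by
      push_cast at h ⊢; rw [h]; ring
    exact absurd this (cast_ne_zero_of_lt m (by omega) (by omega))
  · rw [zig_odd, zig_odd] at h
    have := cast_inj_of_lt m (by omega) (by omega) h; omega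

lemma zig_surj (w : ZMod (2*m)) : ∃ j, j < 2*m ∧ zig m j = w := by
  have hv : w.val < 2*m := w.val_lt
  have hw : ((w.val : ℕ) : ZMod (2*m)) = w := ZMod.natCast_rightInverse w
  rcases Nat.eq_zero_or_pos w.val with h0 | h0
  · refine ⟨0, by have := NeZero.ne m; omega, ?_⟩
    have : zig m (2*0) = -((0:ℕ) : ZMod (2*m)) := zig_even m 0
    simpa using this.trans (by rw [← hw, h0]; simp)
  rcases le_or_gt w.val m with hle | hgt
  · refine ⟨2*(w.val - 1)+1, by omega, ?_⟩
    rw [zig_odd]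
    rw [show w.val - 1 + 1 = w.val by omega, hw]
  · refine ⟨2*(2*m - w.val), by omega, ?_⟩
    rw [zig_even]
    have : ((2*m - w.val : ℕ) : ZMod (2*m)) = ((2*m : ℕ) : ZMod (2*m)) - ((w.val : ℕ) : ZMod (2*m)) := by
      rw [← Nat.cast_sub (by omega)]
    rw [this, hw]
    simp [ZMod.natCast_self]


/-- vertex type: `Option (ZMod (2*m))`, `none` playing the role of `∞`. -/
abbrev Vt (m : ℕ) := Option (ZMod (2*m))

/-- The labeling of the `k`-th Walecki Hamiltonian cycle. -/
def ham (k : ZMod (2*m)) (r : ZMod (2*m+1)) : Vt m :=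
  if r = 0 then none else some (k + zig m (r.val - 1))

lemma ham_zero (k : ZMod (2*m)) : ham m k 0 = none := if_pos rfl

lemma ham_nat (k : ZMod (2*m)) {j : ℕ} (hj : j < 2*m) :
    ham m k ((j+1 : ℕ) : ZMod (2*m+1)) = some (k + zig m j) := by
  have hlt : j + 1 < 2*m+1 := by omega
  have hval : (((j+1 : ℕ) : ZMod (2*m+1))).val = j + 1 := ZMod.val_cast_of_lt hlt
  have hne : ((j+1 : ℕ) : ZMod (2*m+1)) ≠ 0 := by
    intro h; rw [h] at hval; simp at hval
  rw [ham, if_neg hne, hval]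
  simp

lemma ham_inj (k : ZMod (2*m)) : Function.Injective (ham m k) := by
  intro r1 r2 h
  by_cases h1 : r1 = 0 <;> by_cases h2 : r2 = 0
  · rw [h1, h2]
  · rw [ham, ham, if_pos h1, if_neg h2] at h; exact absurd h (by simp)
  · rw [ham, ham, if_neg h1, if_pos h2] at h; exact absurd h (by simp)
  · rw [ham, ham, if_neg h1, if_neg h2] at h
    have hz : zig m (r1.val - 1) = zig m (r2.val - 1) := by
      have := Option.some_injective _ h
      exact add_left_cancel this
    have hv1 : r1.val ≠ 0 := fun hh => h1 ((ZMod.val_eq_zero r1).1 hh)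
    have hv2 : r2.val ≠ 0 := fun hh => h2 ((ZMod.val_eq_zero r2).1 hh)
    have l1 : r1.val < 2*m+1 := r1.val_lt
    have l2 : r2.val < 2*m+1 := r2.val_lt
    have := zig_inj m (j1 := r1.val - 1) (j2 := r2.val - 1) (by omega) (by omega) hz
    exact ZMod.val_injective _ (by omega)

lemma ham_surj (k : ZMod (2*m)) : Function.Surjective (ham m k) := by
  intro x
  cases x with
  | none => exact ⟨0, ham_zero m k⟩
  | some w =>
    obtain ⟨j, hj, hzig⟩ := zig_surj m (w - k)
    exact ⟨((j+1 : ℕ) : ZMod (2*m+1)), by rw [ham_nat m k hj, hzig]; simp⟩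

/-- The `k`-th Walecki Hamiltonian cycle, as a graph. -/
def hamG (k : ZMod (2*m)) : SimpleGraph (Vt m) :=
  SimpleGraph.fromRel (fun x y => ∃ r, x = ham m k r ∧ y = ham m k (r+1))

lemma one_ne_zero_z : (1 : ZMod (2*m+1)) ≠ 0 := by
  have : ((1:ℕ) : ZMod (2*m+1)) ≠ 0 := by
    intro h
    have := (ZMod.natCast_eq_zero_iff 1 (2*m+1)).1 h
    have := Nat.le_of_dvd (by omega) this
    have := NeZero.ne m; omega
  simpa using this

lemma hamG_adj_lab (k : ZMod (2*m)) (a b : ZMod (2*m+1)) :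
    (hamG m k).Adj (ham m k a) (ham m k b) ↔ (b - a = 1 ∨ a - b = 1) := by
  rw [hamG, SimpleGraph.fromRel_adj]
  constructor
  · rintro ⟨hne, ⟨r, h1, h2⟩ | ⟨r, h1, h2⟩⟩
    · left
      rw [ham_inj m k h1, ham_inj m k h2]; ring
    · right
      rw [ham_inj m k h1, ham_inj m k h2]; ring
  · intro h
    have hne : a ≠ b := by
      rcases h with h | h
      · intro he; rw [he] at h; simp at h
      · intro he; rw [he] at h; simp at h
    refine ⟨fun hc => hne (ham_inj m k hc), ?_⟩
    rcases h with h | h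
    · exact Or.inl ⟨a, rfl, by rw [show b = a + 1 by linear_combination h]⟩
    · exact Or.inr ⟨b, rfl, by rw [show a = b + 1 by linear_combination h]⟩


lemma ham_one (k : ZMod (2*m)) : ham m k 1 = some k := by
  have h := ham_nat m k (j := 0) (by have := NeZero.ne m; omega)
  simp only [Nat.zero_add, Nat.cast_one] at h
  rw [h, show zig m 0 = 0 by simpa using zig_even m 0, add_zero]

lemma ham_top (k : ZMod (2*m)) :
    ham m k ((2*m : ℕ) : ZMod (2*m+1)) = some (k + ((m:ℕ) : ZMod (2*m))) := by
  have hm1 := NeZero.ne m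
  have h := ham_nat m k (j := 2*m-1) (by omega)
  rw [show 2*m-1+1 = 2*m by omega] at h
  rw [h, show 2*m-1 = 2*(m-1)+1 by omega, zig_odd, show m-1+1 = m by omega]

lemma top_add_one : ((2*m : ℕ) : ZMod (2*m+1)) + 1 = 0 := by
  have : (((2*m+1 : ℕ)) : ZMod (2*m+1)) = 0 := ZMod.natCast_self _
  push_cast at this ⊢
  linear_combination this

instance fact_one_lt' : Fact (1 < 2*m) := ⟨by have := NeZero.ne m; omega⟩

/-- explicit description of the edges of `hamG k`. -/
def wP (k : ZMod (2*m)) (x y : Vt m) : Prop :=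
  (x = none ∧ (y = some k ∨ y = some (k + ((m:ℕ) : ZMod (2*m))))) ∨
  (y = none ∧ (x = some k ∨ x = some (k + ((m:ℕ) : ZMod (2*m))))) ∨
  (∃ u v, x = some u ∧ y = some v ∧ u ≠ v ∧ (u + v = 2*k ∨ u + v = 2*k + 1))

lemma wP_symm {k : ZMod (2*m)} {x y : Vt m} (h : wP m k x y) : wP m k y x := by
  rcases h with ⟨h1, h2⟩ | ⟨h1, h2⟩ | ⟨u, v, h1, h2, h3, h4⟩
  · exact Or.inr (Or.inl ⟨h1, h2⟩)
  · exact Or.inl ⟨h1, h2⟩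
  · exact Or.inr (Or.inr ⟨v, u, h2, h1, h3.symm, by rwa [add_comm v u]⟩)

lemma ham_step (k : ZMod (2*m)) (a : ZMod (2*m+1)) :
    wP m k (ham m k a) (ham m k (a+1)) := by
  have hm1 := NeZero.ne m
  have hva : ((a.val : ℕ) : ZMod (2*m+1)) = a := ZMod.natCast_rightInverse a
  have hvlt : a.val < 2*m+1 := a.val_lt
  by_cases hv0 : a.val = 0
  · have ha : a = 0 := (ZMod.val_eq_zero a).1 hv0
    subst ha
    rw [ham_zero, zero_add, ham_one]
    exact Or.inl ⟨rfl, Or.inl rfl⟩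
  · by_cases hvt : a.val = 2*m
    · have ha : a = ((2*m : ℕ) : ZMod (2*m+1)) := by rw [← hva, hvt]
      rw [ha, top_add_one m, ham_zero, ham_top]
      exact Or.inr (Or.inl ⟨rfl, Or.inr rfl⟩)
    · set j := a.val - 1 with hjdef
      have hjlt : j + 1 < 2*m := by omega
      have ha : a = ((j+1 : ℕ) : ZMod (2*m+1)) := by rw [← hva]; congr 1; omega
      have hx : ham m k a = some (k + zig m j) := by
        rw [ha]; exact ham_nat m k (by omega)
      have ha1 : a + 1 = (((j+1)+1 : ℕ) : ZMod (2*m+1)) := by rw [ha]; push_cast; ring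
      have hy : ham m k (a+1) = some (k + zig m (j+1)) := by
        rw [ha1]; exact ham_nat m k hjlt
      refine Or.inr (Or.inr ⟨k + zig m j, k + zig m (j+1), hx, hy, ?_, ?_⟩)
      · intro hc
        have := zig_inj m (by omega) (by omega) (add_left_cancel hc)
        omega
      · obtain ⟨t, ht | ht⟩ : ∃ t, j = 2*t ∨ j = 2*t+1 := ⟨j/2, by omega⟩
        · right
          rw [ht, zig_even, show 2*t+1 = 2*t+1 from rfl, zig_odd]
          push_cast; ring
        · left
          rw [ht, show 2*t+1+1 = 2*(t+1) by ring, zig_odd, zig_even]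
          push_cast; ring

lemma adj_none (k : ZMod (2*m)) (w : ZMod (2*m))
    (hw : w = k ∨ w = k + ((m:ℕ) : ZMod (2*m))) :
    (hamG m k).Adj none (some w) := by
  rcases hw with h | h
  · rw [h, ← ham_zero m k, ← ham_one m k]
    rw [hamG_adj_lab]
    left; ring
  · rw [h, ← ham_zero m k, ← ham_top m k]
    rw [hamG_adj_lab]
    right
    linear_combination - top_add_one m

lemma adj_sum1 (k u v : ZMod (2*m)) (hsum : u + v = 2*k + 1)
    (ht : (k - u).val ≤ m - 1) : (hamG m k).Adj (some u) (some v) := by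
  have hm1 := NeZero.ne m
  set t := (k - u).val with htdef
  have hcast : ((t : ℕ) : ZMod (2*m)) = k - u := ZMod.natCast_rightInverse _
  have hu : ham m k ((2*t+1 : ℕ) : ZMod (2*m+1)) = some u := by
    rw [ham_nat m k (show 2*t < 2*m by omega), zig_even, hcast]
    congr 1; ring
  have hv : ham m k (((2*t+1)+1 : ℕ) : ZMod (2*m+1)) = some v := by
    rw [ham_nat m k (show 2*t+1 < 2*m by omega), zig_odd]
    congr 1
    push_cast
    rw [hcast]
    linear_combination - hsum
  rw [← hu, ← hv, hamG_adj_lab]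
  left; push_cast; ring

lemma adj_sum0 (k u v : ZMod (2*m)) (hsum : u + v = 2*k)
    (h1 : 1 ≤ (u - k).val) (h2 : (u - k).val ≤ m - 1) :
    (hamG m k).Adj (some u) (some v) := by
  have hm1 := NeZero.ne m
  set s := (u - k).val with hsdef
  have hcast : ((s : ℕ) : ZMod (2*m)) = u - k := ZMod.natCast_rightInverse _
  set t := s - 1 with htdef
  have hts : t + 1 = s := by omega
  have hu : ham m k (((2*t+1)+1 : ℕ) : ZMod (2*m+1)) = some u := by
    rw [ham_nat m k (show 2*t+1 < 2*m by omega), zig_odd, hts, hcast]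
    congr 1; ring
  have hv : ham m k (((2*t+2)+1 : ℕ) : ZMod (2*m+1)) = some v := by
    rw [show 2*t+2 = 2*(t+1) by ring, ham_nat m k (show 2*(t+1) < 2*m by omega),
      zig_even, hts, hcast]
    congr 1
    linear_combination - hsum
  rw [← hu, ← hv, hamG_adj_lab]
  left; push_cast; ring

lemma sum0_val (k u v : ZMod (2*m)) (hne : u ≠ v) (hsum : u + v = 2*k) :
    (1 ≤ (u-k).val ∧ (u-k).val ≤ m-1) ∨ (1 ≤ (v-k).val ∧ (v-k).val ≤ m-1) := by
  have hm1 := NeZero.ne m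
  have hd : v - k = -(u - k) := by linear_combination hsum
  have hdne : u - k ≠ 0 := by
    intro h0
    have hu : u = k := by linear_combination h0
    have hv : v = k := by rw [h0] at hd; simp at hd; linear_combination hd
    exact hne (hu.trans hv.symm)
  have l1 : (u-k).val < 2*m := ZMod.val_lt _
  have l0 : (u-k).val ≠ 0 := fun hh => hdne ((ZMod.val_eq_zero _).1 hh)
  by_cases hle : (u-k).val ≤ m-1
  · exact Or.inl ⟨by omega, hle⟩
  · have hvv : (v-k).val = 2*m - (u-k).val := by
      rw [hd, ZMod.neg_val, if_neg hdne]
    have hnem : (u-k).val ≠ m := by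
      intro hm2
      have h3 : (v - k).val = (u - k).val := by rw [hvv, hm2]; omega
      have h4 : v - k = u - k := ZMod.val_injective _ h3
      exact hne (by linear_combination - h4)
    exact Or.inr ⟨by omega, by omega⟩

lemma sum1_val (k u v : ZMod (2*m)) (hsum : u + v = 2*k+1) :
    (k - u).val ≤ m-1 ∨ (k - v).val ≤ m-1 := by
  have hm1 := NeZero.ne m
  by_contra hcon
  push_neg at hcon
  obtain ⟨hA, hB⟩ := hcon
  have hAB : (k - u) + (k - v) = -1 := by linear_combination - hsum
  have hval : ((k-u) + (k-v)).val = ((k-u).val + (k-v).val) % (2*m) := ZMod.val_add _ _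
  have hneg1 : (-1 : ZMod (2*m)).val = 2*m - 1 := by
    rw [ZMod.neg_val, if_neg (one_ne_zero), ZMod.val_one]
  rw [hAB, hneg1] at hval
  have b1 : (k-u).val < 2*m := ZMod.val_lt _
  have b2 : (k-v).val < 2*m := ZMod.val_lt _
  rw [Nat.mod_eq_sub_mod (by omega), Nat.mod_eq_of_lt (by omega)] at hval
  omega

lemma hamG_adj_iff (k : ZMod (2*m)) (x y : Vt m) :
    (hamG m k).Adj x y ↔ wP m k x y := by
  constructor
  · intro h
    obtain ⟨a, rfl⟩ := ham_surj m k x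
    obtain ⟨b, rfl⟩ := ham_surj m k y
    rcases (hamG_adj_lab m k a b).1 h with h1 | h1
    · have hb : b = a + 1 := by linear_combination h1
      rw [hb]; exact ham_step m k a
    · have ha : a = b + 1 := by linear_combination h1
      rw [ha]; exact wP_symm m (ham_step m k b)
  · rintro (⟨rfl, hw⟩ | ⟨rfl, hw⟩ | ⟨u, v, rfl, rfl, hne, hsum⟩)
    · obtain ⟨w, rfl, hw'⟩ : ∃ w, y = some w ∧ (w = k ∨ w = k + ((m:ℕ) : ZMod (2*m))) := by
        rcases hw with h | h
        · exact ⟨k, h, Or.inl rfl⟩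
        · exact ⟨_, h, Or.inr rfl⟩
      exact adj_none m k w hw'
    · obtain ⟨w, rfl, hw'⟩ : ∃ w, x = some w ∧ (w = k ∨ w = k + ((m:ℕ) : ZMod (2*m))) := by
        rcases hw with h | h
        · exact ⟨k, h, Or.inl rfl⟩
        · exact ⟨_, h, Or.inr rfl⟩
      exact (adj_none m k w hw').symm
    · rcases hsum with hs | hs
      · rcases sum0_val m k u v hne hs with ⟨h1, h2⟩ | ⟨h1, h2⟩
        · exact adj_sum0 m k u v hs h1 h2
        · exact (adj_sum0 m k v u (by linear_combination hs - (add_comm u v : u + v = v + u)) h1 h2).symm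
      · rcases sum1_val m k u v hs with h1 | h1
        · exact adj_sum1 m k u v hs h1
        · exact (adj_sum1 m k v u (by linear_combination hs - (add_comm u v : u + v = v + u)) h1).symm

lemma cast2m {a b : ℕ} (ha : a < 2*m) (hb : b < 2*m) :
    ((a : ℕ) : ZMod (2*m)) = ((b : ℕ) : ZMod (2*m)) ↔ a = b :=
  ⟨cast_inj_of_lt m ha hb, fun h => by rw [h]⟩

lemma unique_none_some (v : ZMod (2*m)) :
    ∃! i : Fin m, (hamG m ((i : ℕ) : ZMod (2*m))).Adj none (some v) := by
  have hm1 := NeZero.ne m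
  have hsimp : ∀ k : ZMod (2*m), (hamG m k).Adj none (some v) ↔
      (v = k ∨ v = k + ((m:ℕ) : ZMod (2*m))) := by
    intro k
    rw [hamG_adj_iff, wP]
    simp
  have hvv : ((v.val : ℕ) : ZMod (2*m)) = v := ZMod.natCast_rightInverse v
  have hvlt : v.val < 2*m := ZMod.val_lt v
  have key : ∀ i : Fin m, (v = ((i:ℕ) : ZMod (2*m)) ∨
      v = ((i:ℕ) : ZMod (2*m)) + ((m:ℕ) : ZMod (2*m))) ↔
      ((i : ℕ) = v.val ∨ (i : ℕ) + m = v.val) := by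
    intro i
    constructor
    · rintro (h | h)
      · left
        have : ((v.val : ℕ) : ZMod (2*m)) = (((i:ℕ) : ℕ) : ZMod (2*m)) := by rw [hvv, h]
        exact (cast_inj_of_lt m hvlt (by omega) this).symm
      · right
        have h2 : v = (((i:ℕ) + m : ℕ) : ZMod (2*m)) := by rw [h]; push_cast; ring
        have : ((v.val : ℕ) : ZMod (2*m)) = (((i:ℕ) + m : ℕ) : ZMod (2*m)) := by rw [hvv, ← h2]
        exact (cast_inj_of_lt m hvlt (by omega) this).symm
    · rintro (h | h)
      · left; rw [← hvv, ← h]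
      · right
        rw [← hvv, ← h]; push_cast; ring
  by_cases hlt : v.val < m
  · refine ⟨⟨v.val, hlt⟩, ?_, ?_⟩
    · show (hamG m _).Adj _ _
      rw [hsimp, key]; left; rfl
    · intro i hi
      rw [hsimp, key] at hi
      apply Fin.ext
      rcases hi with h | h
      · simpa using h
      · exfalso; have := i.isLt; omega
  · refine ⟨⟨v.val - m, by omega⟩, ?_, ?_⟩
    · show (hamG m _).Adj _ _
      rw [hsimp, key]; right; simp; omega
    · intro i hi
      rw [hsimp, key] at hi
      apply Fin.ext
      rcases hi with h | h
      · exfalso; have := i.isLt; omega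
      · simp; omega

lemma unique_some_some (u v : ZMod (2*m)) (hne : u ≠ v) :
    ∃! i : Fin m, (hamG m ((i : ℕ) : ZMod (2*m))).Adj (some u) (some v) := by
  have hm1 := NeZero.ne m
  have hsimp : ∀ k : ZMod (2*m), (hamG m k).Adj (some u) (some v) ↔
      (u + v = 2*k ∨ u + v = 2*k + 1) := by
    intro k
    rw [hamG_adj_iff, wP]
    simp [hne]
  set s := (u + v).val with hsdef
  have hss : ((s : ℕ) : ZMod (2*m)) = u + v := ZMod.natCast_rightInverse _
  have hslt : s < 2*m := ZMod.val_lt _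
  have key : ∀ i : Fin m, (u + v = 2*((i:ℕ) : ZMod (2*m)) ∨
      u + v = 2*((i:ℕ) : ZMod (2*m)) + 1) ↔ (s = 2*(i:ℕ) ∨ s = 2*(i:ℕ) + 1) := by
    intro i
    have c1 : 2*((i:ℕ) : ZMod (2*m)) = ((2*(i:ℕ) : ℕ) : ZMod (2*m)) := by push_cast; ring
    have c2 : 2*((i:ℕ) : ZMod (2*m)) + 1 = ((2*(i:ℕ)+1 : ℕ) : ZMod (2*m)) := by push_cast; ring
    have hi := i.isLt
    constructor
    · rintro (h | h)
      · left; exact cast_inj_of_lt m hslt (by omega) (by rw [hss, h, c1])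
      · right; exact cast_inj_of_lt m hslt (by omega) (by rw [hss, h, c2])
    · rintro (h | h)
      · left; rw [← hss, h, c1]
      · right; rw [← hss, h, c2]
  refine ⟨⟨s/2, by omega⟩, ?_, ?_⟩
  · show (hamG m _).Adj _ _
    rw [hsimp, key]
    show s = 2*(s/2) ∨ s = 2*(s/2)+1
    rcases Nat.even_or_odd s with he | ho
    · left; rcases he with ⟨c, hc⟩; omega
    · right; rw [Nat.odd_iff] at ho; omega
  · intro i hi
    rw [hsimp, key] at hi
    apply Fin.ext
    show (i:ℕ) = s/2
    rcases hi with h | h <;> omega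

lemma exists_unique_k (x y : Vt m) (hxy : x ≠ y) :
    ∃! i : Fin m, (hamG m ((i : ℕ) : ZMod (2*m))).Adj x y := by
  match x, y with
  | none, none => exact absurd rfl hxy
  | none, some v => exact unique_none_some m v
  | some u, none =>
    have hco : ∀ i : Fin m, ((hamG m ((i : ℕ) : ZMod (2*m))).Adj (some u) none ↔
        (hamG m ((i : ℕ) : ZMod (2*m))).Adj none (some u)) :=
      fun i => SimpleGraph.adj_comm _ _ _
    exact (existsUnique_congr hco).2 (unique_none_some m u)
  | some u, some v => exact unique_some_some m u v (fun h => hxy (by rw [h]))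

/-- The torus family: boxes of equal Walecki cycles, and tensor products of pairs. -/
def famG : (Fin m ⊕ Fin m × Fin m) → SimpleGraph (Vt m × Vt m)
  | Sum.inl k => hamG m ((k:ℕ) : ZMod (2*m)) □ hamG m ((k:ℕ) : ZMod (2*m))
  | Sum.inr kl => tensG (hamG m ((kl.1:ℕ) : ZMod (2*m))) (hamG m ((kl.2:ℕ) : ZMod (2*m)))

@[simp] lemma famG_inl (k : Fin m) : famG m (Sum.inl k)
    = (hamG m ((k:ℕ) : ZMod (2*m)) □ hamG m ((k:ℕ) : ZMod (2*m))) := rfl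

@[simp] lemma famG_inr (kl : Fin m × Fin m) : famG m (Sum.inr kl)
    = tensG (hamG m ((kl.1:ℕ) : ZMod (2*m))) (hamG m ((kl.2:ℕ) : ZMod (2*m))) := rfl

lemma famG_exists_unique (a b : Vt m × Vt m) (hab : a ≠ b) :
    ∃! i, (famG m i).Adj a b := by
  obtain ⟨x1, x2⟩ := a
  obtain ⟨y1, y2⟩ := b
  by_cases h1 : x1 = y1 <;> by_cases h2 : x2 = y2
  · exact absurd (by rw [h1, h2]) hab
  · subst h1
    obtain ⟨k, hk, hku⟩ := exists_unique_k m x2 y2 h2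
    refine ⟨Sum.inl k, ?_, ?_⟩
    · show (famG m (Sum.inl k)).Adj _ _
      rw [famG_inl, SimpleGraph.boxProd_adj]
      exact Or.inr ⟨hk, rfl⟩
    · rintro (k' | ⟨k1, k2⟩) hadj
      · rw [famG_inl, SimpleGraph.boxProd_adj] at hadj
        rcases hadj with ⟨hadj1, -⟩ | ⟨hadj2, -⟩
        · exact absurd hadj1 (SimpleGraph.irrefl _)
        · rw [hku k' hadj2]
      · rw [famG_inr, tensG_adj] at hadj
        exact absurd hadj.1 (SimpleGraph.irrefl _)
  · subst h2
    obtain ⟨k, hk, hku⟩ := exists_unique_k m x1 y1 h1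
    refine ⟨Sum.inl k, ?_, ?_⟩
    · show (famG m (Sum.inl k)).Adj _ _
      rw [famG_inl, SimpleGraph.boxProd_adj]
      exact Or.inl ⟨hk, rfl⟩
    · rintro (k' | ⟨k1, k2⟩) hadj
      · rw [famG_inl, SimpleGraph.boxProd_adj] at hadj
        rcases hadj with ⟨hadj1, -⟩ | ⟨hadj2, -⟩
        · rw [hku k' hadj1]
        · exact absurd hadj2 (SimpleGraph.irrefl _)
      · rw [famG_inr, tensG_adj] at hadj
        exact absurd hadj.2 (SimpleGraph.irrefl _)
  · obtain ⟨k, hk, hku⟩ := exists_unique_k m x1 y1 h1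
    obtain ⟨l, hl, hlu⟩ := exists_unique_k m x2 y2 h2
    refine ⟨Sum.inr (k, l), ?_, ?_⟩
    · show (famG m (Sum.inr (k, l))).Adj _ _
      rw [famG_inr, tensG_adj]
      exact ⟨hk, hl⟩
    · rintro (k' | ⟨k1, k2⟩) hadj
      · rw [famG_inl, SimpleGraph.boxProd_adj] at hadj
        rcases hadj with ⟨-, hc⟩ | ⟨-, hc⟩
        · exact absurd hc h2
        · exact absurd hc h1
      · rw [famG_inr, tensG_adj] at hadj
        have e1 : k1 = k := hku k1 hadj.1
        have e2 : k2 = l := hlu k2 hadj.2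
        rw [e1, e2]

/-- the standard cycle on `ZMod (2*m+1)` -/
def cycZ : SimpleGraph (ZMod (2*m+1)) := SimpleGraph.fromRel (fun x y => x - y = 1)

lemma cycZ_adj (x y : ZMod (2*m+1)) :
    (cycZ m).Adj x y ↔ (x - y = 1 ∨ y - x = 1) := by
  rw [cycZ, SimpleGraph.fromRel_adj]
  constructor
  · exact And.right
  · intro h
    refine ⟨?_, h⟩
    intro he
    rcases h with h | h <;> (rw [he, sub_self] at h; exact one_ne_zero_z m h.symm)

lemma cast_inj_of_lt' {a b : ℕ} (ha : a < 2*m+1) (hb : b < 2*m+1)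
    (h : (a : ZMod (2*m+1)) = (b : ZMod (2*m+1))) : a = b := by
  have := congrArg ZMod.val h
  rwa [ZMod.val_cast_of_lt ha, ZMod.val_cast_of_lt hb] at this

/-- `Fin (2*m+1) ≃ ZMod (2*m+1)` -/
def finZ : Fin (2*m+1) ≃ ZMod (2*m+1) where
  toFun i := ((i : ℕ) : ZMod (2*m+1))
  invFun z := ⟨z.val, z.val_lt⟩
  left_inv i := by
    apply Fin.ext
    show (((i : ℕ) : ZMod (2*m+1))).val = (i : ℕ)
    exact ZMod.val_cast_of_lt i.isLt
  right_inv z := ZMod.natCast_rightInverse z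

lemma fin_sub_cast (u v : Fin (2*m+1)) :
    (((u - v : Fin (2*m+1)) : ℕ) : ZMod (2*m+1))
      = ((u:ℕ) : ZMod (2*m+1)) - ((v:ℕ) : ZMod (2*m+1)) := by
  have h1 : ((u - v : Fin (2*m+1)) : ℕ) = (2*m+1 - (v:ℕ) + (u:ℕ)) % (2*m+1) := by
    rw [Fin.sub_def]
  rw [h1, ZMod.natCast_mod, Nat.cast_add,
    Nat.cast_sub (le_of_lt v.isLt), ZMod.natCast_self]
  ring

lemma fin_sub_one_iff (u v : Fin (2*m+1)) :
    (u - v : Fin (2*m+1)).val = 1 ↔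
      ((u:ℕ) : ZMod (2*m+1)) - ((v:ℕ) : ZMod (2*m+1)) = 1 := by
  constructor
  · intro h
    rw [← fin_sub_cast, h]
    exact Nat.cast_one
  · intro h
    have h2 : (((u - v : Fin (2*m+1)) : ℕ) : ZMod (2*m+1)) = ((1:ℕ) : ZMod (2*m+1)) := by
      rw [fin_sub_cast, h, Nat.cast_one]
    exact cast_inj_of_lt' m (u - v).isLt (by have := NeZero.ne m; omega) h2

/-- the mathlib `cycleGraph` is isomorphic to `cycZ`. -/
noncomputable def cycIso : cycleGraph (2*m+1) ≃g cycZ m where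
  toEquiv := finZ m
  map_rel_iff' := by
    intro u v
    rw [cycZ_adj]
    show ((((u:ℕ) : ZMod (2*m+1)) - ((v:ℕ) : ZMod (2*m+1)) = 1 ∨
      ((v:ℕ) : ZMod (2*m+1)) - ((u:ℕ) : ZMod (2*m+1)) = 1) ↔ (cycleGraph (2*m+1)).Adj u v)
    rw [SimpleGraph.cycleGraph_adj']
    rw [← fin_sub_one_iff, ← fin_sub_one_iff]

/-- each `hamG` is a cycle. -/
noncomputable def hamIso (k : ZMod (2*m)) : cycZ m ≃g hamG m k where
  toEquiv := Equiv.ofBijective (ham m k) ⟨ham_inj m k, ham_surj m k⟩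
  map_rel_iff' := by
    intro a b
    show (hamG m k).Adj (ham m k a) (ham m k b) ↔ (cycZ m).Adj a b
    rw [hamG_adj_lab, cycZ_adj]
    tauto

/-- congruence of box products under isomorphisms. -/
def boxProdCongr {α β γ δ : Type*} {G : SimpleGraph α} {H : SimpleGraph β}
    {G' : SimpleGraph γ} {H' : SimpleGraph δ} (e1 : G ≃g G') (e2 : H ≃g H') :
    (G □ H) ≃g (G' □ H') where
  toEquiv := Equiv.prodCongr e1.toEquiv e2.toEquiv
  map_rel_iff' := by
    intro a b
    show (G' □ H').Adj (e1 a.1, e2 a.2) (e1 b.1, e2 b.2) ↔ (G □ H).Adj a b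
    rw [SimpleGraph.boxProd_adj, SimpleGraph.boxProd_adj, e1.map_adj_iff, e2.map_adj_iff]
    constructor
    · rintro (⟨h, he⟩ | ⟨h, he⟩)
      · exact Or.inl ⟨h, e2.toEquiv.injective he⟩
      · exact Or.inr ⟨h, e1.toEquiv.injective he⟩
    · rintro (⟨h, he⟩ | ⟨h, he⟩)
      · exact Or.inl ⟨h, congrArg e2 he⟩
      · exact Or.inr ⟨h, congrArg e1 he⟩

lemma htwo : IsUnit (2 : ZMod (2*m+1)) := by
  have h : ((2 : ℕ) : ZMod (2*m+1)) = 2 := by push_cast; ring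
  rw [← h, ZMod.isUnit_iff_coprime]
  rw [Nat.coprime_two_left]
  exact ⟨m, by ring⟩

lemma tens_arith (a b c d : ZMod (2*m+1)) :
    ((c+d) - (a+b) = 1 ∨ (a+b) - (c+d) = 1) ∧ ((c-d) - (a-b) = 1 ∨ (a-b) - (c-d) = 1)
    ↔ (((a - c = 1 ∨ c - a = 1) ∧ b = d) ∨ ((b - d = 1 ∨ d - b = 1) ∧ a = c)) := by
  have hcan : ∀ x y : ZMod (2*m+1), 2*x = 2*y → x = y :=
    fun x y h => (htwo m).mul_left_cancel h
  constructor
  · rintro ⟨h1 | h1, h2 | h2⟩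
    · have e1 : c - a = 1 := hcan _ _ (by linear_combination h1 + h2)
      have e2 : b = d := by linear_combination e1 - h1
      exact Or.inl ⟨Or.inr e1, e2⟩
    · have e1 : d - b = 1 := hcan _ _ (by linear_combination h1 + h2)
      have e2 : a = c := by linear_combination e1 - h1
      exact Or.inr ⟨Or.inr e1, e2⟩
    · have e1 : b - d = 1 := hcan _ _ (by linear_combination h1 + h2)
      have e2 : a = c := by linear_combination h1 - e1
      exact Or.inr ⟨Or.inl e1, e2⟩
    · have e1 : a - c = 1 := hcan _ _ (by linear_combination h1 + h2)
      have e2 : b = d := by linear_combination h1 - e1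
      exact Or.inl ⟨Or.inl e1, e2⟩
  · rintro (⟨h1 | h1, h2⟩ | ⟨h1 | h1, h2⟩)
    · exact ⟨Or.inr (by linear_combination h1 + h2), Or.inr (by linear_combination h1 - h2)⟩
    · exact ⟨Or.inl (by linear_combination h1 - h2), Or.inl (by linear_combination h1 + h2)⟩
    · exact ⟨Or.inr (by linear_combination h1 + h2), Or.inl (by linear_combination h1 - h2)⟩
    · exact ⟨Or.inl (by linear_combination h1 - h2), Or.inr (by linear_combination h1 + h2)⟩

/-- the sum/difference equivalence. -/
noncomputable def sdEquiv : (ZMod (2*m+1) × ZMod (2*m+1)) ≃ (ZMod (2*m+1) × ZMod (2*m+1)) :=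
  Equiv.ofBijective (fun ab => (ab.1 + ab.2, ab.1 - ab.2)) (by
    rw [← Finite.injective_iff_bijective]
    rintro ⟨a, b⟩ ⟨c, d⟩ h
    have h1 : a + b = c + d := congrArg Prod.fst h
    have h2 : a - b = c - d := congrArg Prod.snd h
    have hcan : ∀ x y : ZMod (2*m+1), 2*x = 2*y → x = y :=
      fun x y h => (htwo m).mul_left_cancel h
    have e1 : a = c := hcan _ _ (by linear_combination h1 + h2)
    have e2 : b = d := hcan _ _ (by linear_combination h1 - h2)
    rw [e1, e2])

lemma sdEquiv_apply (ab : ZMod (2*m+1) × ZMod (2*m+1)) :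
    sdEquiv m ab = (ab.1 + ab.2, ab.1 - ab.2) := rfl

/-- the tensor product of two Walecki cycles is a torus. -/
noncomputable def tensIso (k l : ZMod (2*m)) : (cycZ m □ cycZ m) ≃g tensG (hamG m k) (hamG m l) where
  toEquiv := (sdEquiv m).trans (Equiv.prodCongr
    (Equiv.ofBijective (ham m k) ⟨ham_inj m k, ham_surj m k⟩)
    (Equiv.ofBijective (ham m l) ⟨ham_inj m l, ham_surj m l⟩))
  map_rel_iff' := by
    rintro ⟨a, b⟩ ⟨c, d⟩
    show (tensG (hamG m k) (hamG m l)).Adj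
      (ham m k (a+b), ham m l (a-b)) (ham m k (c+d), ham m l (c-d)) ↔ _
    rw [tensG_adj]
    show _ ↔ (cycZ m □ cycZ m).Adj (a, b) (c, d)
    rw [SimpleGraph.boxProd_adj]
    simp only [hamG_adj_lab, cycZ_adj]
    exact tens_arith m a b c d

/-- every member of the family is a torus. -/
noncomputable def famIso (i : Fin m ⊕ Fin m × Fin m) :
    (cycleGraph (2*m+1) □ cycleGraph (2*m+1)) ≃g famG m i := by
  cases i with
  | inl k =>
    exact (boxProdCongr ((cycIso m).trans (hamIso m _)) ((cycIso m).trans (hamIso m _)))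
  | inr kl =>
    exact (boxProdCongr (cycIso m) (cycIso m)).trans (tensIso m _ _)

end Walecki

/-- any `comap` along an equivalence is an isomorphism. -/
def isoComap {α β : Type*} (e : α ≃ β) (G : SimpleGraph β) :
    (SimpleGraph.comap e G) ≃g G where
  toEquiv := e
  map_rel_iff' := Iff.rfl

/-- The master construction: `K_{(2m+1)^2}` decomposes into `m + m*m`
 copies of `C_{2m+1} □ C_{2m+1}`. -/
theorem master (m : ℕ) (hm : m ≠ 0) :
    ∃ f : Fin (m + m*m) → SimpleGraph (Fin ((2*m+1)^2)),
      (∀ i, Nonempty (f i ≃g (cycleGraph (2*m+1) □ cycleGraph (2*m+1)))) ∧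
      (Pairwise fun i j => Disjoint (f i) (f j)) ∧
      (⨆ i, f i) = ⊤ := by
  haveI : NeZero m := ⟨hm⟩
  have cardV : Fintype.card (Vt m × Vt m) = (2*m+1)^2 := by
    rw [Fintype.card_prod, Fintype.card_option, ZMod.card]
    ring
  let ve : Fin ((2*m+1)^2) ≃ (Vt m × Vt m) :=
    Fintype.equivOfCardEq (by rw [Fintype.card_fin, cardV])
  let ie : Fin (m + m*m) ≃ (Fin m ⊕ Fin m × Fin m) :=
    Fintype.equivOfCardEq (by simp)
  refine ⟨fun i => SimpleGraph.comap ve (famG m (ie i)), ?_, ?_, ?_⟩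
  · intro i
    exact ⟨(isoComap ve (famG m (ie i))).trans (famIso m (ie i)).symm⟩
  · intro i j hij
    intro K hK1 hK2
    rw [le_bot_iff]
    by_contra hKne
    obtain ⟨x, y, hxy⟩ : ∃ x y, K.Adj x y := by
      by_contra hcon
      push_neg at hcon
      apply hKne
      ext a b
      simp only [SimpleGraph.bot_adj, iff_false]
      exact hcon a b
    have h1 := hK1 hxy
    have h2 := hK2 hxy
    rw [SimpleGraph.comap_adj] at h1 h2
    have hne : ve x ≠ ve y := h1.ne
    obtain ⟨i0, -, hu⟩ := famG_exists_unique m _ _ hne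
    exact hij (ie.injective ((hu _ h1).trans (hu _ h2).symm))
  · ext x y
    simp only [SimpleGraph.iSup_adj, SimpleGraph.comap_adj, SimpleGraph.top_adj]
    constructor
    · rintro ⟨i, hi⟩
      intro he
      exact hi.ne (by rw [he])
    · intro hxy
      have hne : ve x ≠ ve y := fun h => hxy (ve.injective h)
      obtain ⟨i0, hi0, -⟩ := famG_exists_unique m _ _ hne
      refine ⟨ie.symm i0, ?_⟩
      rw [Equiv.apply_symm_apply]
      exact hi0

end TorusDesign

open SimpleGraph

theorem torus_design_prime_squared (p : ℕ) [Fact p.Prime] (hodd : Odd p) :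
    ∃ f : Fin ((p ^ 4 - 1) / 4) → SimpleGraph (Fin (p ^ 4)),
      (∀ i, Nonempty (f i ≃g
          (SimpleGraph.cycleGraph (p ^ 2) □ SimpleGraph.cycleGraph (p ^ 2)))) ∧
      (Pairwise fun i j => Disjoint (f i) (f j)) ∧
      (⨆ i, f i) = ⊤ := by
  have hp : p.Prime := Fact.out
  obtain ⟨m, hm⟩ := hodd.pow (n := 2)
  have h3 : 3 ≤ p := by
    obtain ⟨t, ht⟩ := hodd
    have := hp.two_le
    omega
  have h9 : 9 ≤ p^2 := by
    calc (9:ℕ) = 3^2 := by norm_num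
    _ ≤ p^2 := Nat.pow_le_pow_left h3 2
  have hm0 : m ≠ 0 := by omega
  have e4 : p^4 = (2*m+1)^2 := by
    have h : p^4 = (p^2)^2 := by ring
    rw [h, hm]
  have eidx : (p^4-1)/4 = m + m*m := by
    have h1 : p^4 = 4*(m + m*m) + 1 := by rw [e4]; ring
    omega
  rw [eidx, e4, hm]
  exact TorusDesign.master m hm0
end

section
/- For every odd n ≥ 3, the torus grid graph C_n □ C_n can be decomposed into two edge-disjoint Hamiltonian cycles. -/
open SimpleGraph

lemma cyc_adj_iff {M : ℕ} [NeZero M] (hM : 2 ≤ M) (a b : Fin M) :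
    (cycleGraph M).Adj a b ↔ b = a + 1 ∨ a = b + 1 := by
  obtain ⟨k, rfl⟩ : ∃ k, M = k + 2 := ⟨M - 2, by omega⟩
  rw [cycleGraph_adj]
  rw [sub_eq_iff_eq_add, sub_eq_iff_eq_add, add_comm (1:Fin (k+2)) a, add_comm (1:Fin (k+2)) b, or_comm]

def torusStep {N : ℕ} [NeZero N] (u : Fin N × Fin N) : Fin N × Fin N :=
  if u.1 + u.2 + 1 = 0 then (u.1, u.2 + 1) else (u.1 + 1, u.2)

def torusEquiv (N : ℕ) (hN : 3 ≤ N) : Fin (N * N) ≃ Fin N × Fin N where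
  toFun t := (⟨(t.val % N + (N - t.val / N)) % N, Nat.mod_lt _ (by omega)⟩,
              ⟨t.val / N, by have := t.isLt; exact Nat.div_lt_iff_lt_mul (by omega) |>.mpr this⟩)
  invFun p := ⟨(p.1.val + p.2.val) % N + N * p.2.val, by
    have h1 : (p.1.val + p.2.val) % N < N := Nat.mod_lt _ (by omega)
    have h2 : p.2.val < N := p.2.isLt
    nlinarith⟩
  left_inv t := by
    have ht := t.isLt
    have hN0 : 0 < N := by omega
    set q := t.val / N with hq
    set r := t.val % N with hr
    have hqN : q < N := Nat.div_lt_iff_lt_mul hN0 |>.mpr ht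
    have hrN : r < N := Nat.mod_lt _ hN0
    apply Fin.ext
    simp only
    have h1 : ((r + (N - q)) % N + q) % N = (r + (N - q) + q) % N := Nat.mod_add_mod _ _ _
    have h2 : r + (N - q) + q = r + N := by omega
    have h3 : (r + N) % N = r := by
      rw [Nat.add_mod_right]; exact Nat.mod_eq_of_lt hrN
    rw [h1, h2, h3, Nat.add_comm]
    exact Nat.div_add_mod t.val N
  right_inv p := by
    obtain ⟨x, y⟩ := p
    have hN0 : 0 < N := by omega
    have hx := x.isLt
    have hy := y.isLt
    have hs : (x.val + y.val) % N < N := Nat.mod_lt _ hN0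
    have hdiv : ((x.val + y.val) % N + N * y.val) / N = y.val := by
      rw [Nat.add_mul_div_left _ _ hN0, Nat.div_eq_of_lt hs, Nat.zero_add]
    have hmod : ((x.val + y.val) % N + N * y.val) % N = (x.val + y.val) % N := by
      rw [Nat.add_mul_mod_self_left, Nat.mod_mod_of_dvd _ dvd_rfl]
    apply Prod.ext
    · apply Fin.ext
      simp only [hdiv, hmod]
      have h1 : ((x.val + y.val) % N + (N - y.val)) % N = (x.val + y.val + (N - y.val)) % N :=
        Nat.mod_add_mod _ _ _
      have h2 : x.val + y.val + (N - y.val) = x.val + N := by omega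
      rw [h1, h2, Nat.add_mod_right]
      exact Nat.mod_eq_of_lt hx
    · apply Fin.ext
      simp only [hdiv]

section
variable {N : ℕ}

lemma torusEquiv_symm_val (hN : 3 ≤ N) (u : Fin N × Fin N) :
    ((torusEquiv N hN).symm u).val = (u.1.val + u.2.val) % N + N * u.2.val := rfl

lemma fin_addcond (hN : 3 ≤ N) (x y : Fin N) :
    (haveI : NeZero N := ⟨by omega⟩; x + y + 1 = 0) ↔ x.val + y.val + 1 = N := by
  haveI : NeZero N := ⟨by omega⟩
  have hx := x.isLt; have hy := y.isLt
  rw [Fin.ext_iff]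
  rw [Fin.add_def, Fin.add_def]
  simp only [Fin.val_one', Fin.val_zero]
  rw [Nat.mod_eq_of_lt (show 1 < N by omega), Nat.mod_add_mod]
  constructor
  · intro h
    rcases (Nat.dvd_iff_mod_eq_zero).mpr h with ⟨c, hc⟩
    have hc1 : c = 1 := by nlinarith
    rw [hc1, Nat.mul_one] at hc
    omega
  · intro h
    rw [h, Nat.mod_self]

lemma torus_succ (hN : 3 ≤ N) (u : Fin N × Fin N) :
    haveI : NeZero N := ⟨by omega⟩
    (torusEquiv N hN).symm (torusStep u) = (torusEquiv N hN).symm u + 1 := by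
  haveI : NeZero N := ⟨by omega⟩
  obtain ⟨x, y⟩ := u
  have hx := x.isLt; have hy := y.isLt
  have hN0 : 0 < N := by omega
  have hM : 9 ≤ N * N := Nat.mul_le_mul hN hN
  apply Fin.ext
  rw [Fin.add_def]
  simp only [Fin.val_one', torusEquiv_symm_val]
  rw [Nat.mod_eq_of_lt (show 1 < N * N by omega)]
  by_cases hc : x + y + 1 = 0
  · rw [torusStep, if_pos hc]
    rw [fin_addcond hN] at hc
    simp only
    rw [Fin.add_def]
    simp only [Fin.val_one']
    rw [Nat.mod_eq_of_lt (show 1 < N by omega)]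
    have hs : (x.val + y.val) % N = N - 1 := by
      have : x.val + y.val = N - 1 := by omega
      rw [this, Nat.mod_eq_of_lt (by omega)]
    rcases Nat.lt_or_ge y.val (N-1) with hy' | hy'
    · have h1 : (y.val + 1) % N = y.val + 1 := Nat.mod_eq_of_lt (by omega)
      rw [h1]
      have h2 : (x.val + (y.val + 1)) % N = 0 := by
        have : x.val + (y.val + 1) = N := by omega
        rw [this, Nat.mod_self]
      rw [h2, hs]
      have h3 : N - 1 + N * y.val + 1 = N * (y.val + 1) := by ring_nf; omega
      rw [h3, Nat.mod_eq_of_lt (by nlinarith)]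
      omega
    · have hyv : y.val = N - 1 := by omega
      have hxv : x.val = 0 := by omega
      have h1 : (y.val + 1) % N = 0 := by rw [hyv]; simp [Nat.sub_add_cancel hN0, Nat.mod_self]
      rw [h1, hs]
      simp only [Nat.add_zero, Nat.mul_zero, hxv]
      have h3 : N - 1 + N * y.val + 1 = N * N := by rw [hyv]; ring_nf; nlinarith [Nat.sub_add_cancel hN0]
      rw [h3, Nat.mod_self]
      simp
  · rw [torusStep, if_neg hc]
    rw [fin_addcond hN] at hc
    simp only
    rw [Fin.add_def]
    simp only [Fin.val_one']
    rw [Nat.mod_eq_of_lt (show 1 < N by omega)]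
    set s := (x.val + y.val) % N with hsdef
    have hslt : s < N := Nat.mod_lt _ hN0
    have hs1 : s + 1 < N := by
      rcases Nat.lt_or_ge (x.val + y.val) N with h | h
      · rw [hsdef, Nat.mod_eq_of_lt h]; omega
      · have : x.val + y.val - N < N := by omega
        have he : (x.val + y.val) % N = x.val + y.val - N := by
          rw [Nat.mod_eq_sub_mod h, Nat.mod_eq_of_lt this]
        omega
    have h1 : ((x.val + 1) % N + y.val) % N = s + 1 := by
      rw [Nat.mod_add_mod]
      have : x.val + 1 + y.val = x.val + y.val + 1 := by omega
      rw [this, ← Nat.mod_add_mod, ← hsdef, Nat.mod_eq_of_lt hs1]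
    rw [h1]
    rw [Nat.mod_eq_of_lt (by nlinarith)]
    omega

end

section
variable {M : ℕ}

def gv (M : ℕ) (hM : 3 ≤ M) (j : ℕ) : Fin M := ⟨j % M, Nat.mod_lt _ (by omega)⟩

lemma gv_congr {hM : 3 ≤ M} {a b : ℕ} (h : a = b) : gv M hM a = gv M hM b := by rw [h]

lemma gv_val {hM : 3 ≤ M} {a : ℕ} (h : a < M) : (gv M hM a).val = a := Nat.mod_eq_of_lt h

lemma gv_adj (hM : 3 ≤ M) (a : ℕ) : (cycleGraph M).Adj (gv M hM a) (gv M hM (a + 1)) := by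
  rw [cycleGraph_adj']
  right
  rw [Fin.sub_def]
  simp only [gv]
  have hr : a % M < M := Nat.mod_lt _ (by omega)
  have h2 : (a + 1) % M = (a % M + 1) % M := (Nat.mod_add_mod a M 1).symm
  rw [h2]
  by_cases h : a % M + 1 = M
  · rw [h, Nat.mod_self]
    have h3 : M - a % M + 0 = 1 := by omega
    rw [h3]
    exact Nat.mod_eq_of_lt (by omega)
  · have h5 : (a % M + 1) % M = a % M + 1 := Nat.mod_eq_of_lt (by omega)
    rw [h5]
    have h4 : M - a % M + (a % M + 1) = 1 + M := by omega
    rw [h4, Nat.add_mod_right]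
    exact Nat.mod_eq_of_lt (by omega)

lemma gv_adj' (hM : 3 ≤ M) {a b : ℕ} (h : b = a + 1) :
    (cycleGraph M).Adj (gv M hM a) (gv M hM b) := by
  rw [gv_congr h]; exact gv_adj hM a

def cycWalk (hM : 3 ≤ M) : (k : ℕ) → k < M → (cycleGraph M).Walk (gv M hM (M - 1 - k)) (gv M hM M)
  | 0, _ => Walk.cons (gv_adj' hM (show M = (M - 1 - 0) + 1 by omega)) Walk.nil
  | (k+1), hk =>
      Walk.cons (gv_adj' hM (show M - 1 - k = (M - 1 - (k+1)) + 1 by omega))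
        (cycWalk hM k (by omega))

lemma cycWalk_support (hM : 3 ≤ M) (k : ℕ) (hk : k < M) :
    (cycWalk hM k hk).support = (List.range (k + 2)).map (fun j => gv M hM (M - 1 - k + j)) := by
  induction k with
  | zero =>
      simp only [cycWalk, Walk.support_cons, Walk.support_nil]
      rw [List.range_succ, List.range_succ, List.range_zero]
      simp only [List.map_append, List.map_cons, List.map_nil, List.nil_append,
        List.cons_append, List.nil_append]
      rw [show M - 1 - 0 + 0 = M - 1 - 0 from by omega,
        show M - 1 - 0 + 1 = M from by omega]
  | succ k ih =>
      simp only [cycWalk, Walk.support_cons]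
      rw [ih (by omega)]
      conv_rhs => rw [show k + 1 + 2 = (k + 2) + 1 from rfl, List.range_succ_eq_map,
        List.map_cons, List.map_map]
      rw [show M - 1 - (k+1) + 0 = M - 1 - (k+1) from by omega]
      congr 1
      apply List.map_congr_left
      intro j hj
      simp only [Function.comp_apply]
      rw [show M - 1 - k + j = M - 1 - (k+1) + Nat.succ j from by omega]

lemma cycWalk_edges (hM : 3 ≤ M) (k : ℕ) (hk : k < M) :
    (cycWalk hM k hk).edges =
      (List.range (k + 1)).map
        (fun j => s(gv M hM (M - 1 - k + j), gv M hM (M - 1 - k + j + 1))) := by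
  induction k with
  | zero =>
      simp only [cycWalk, Walk.edges_cons, Walk.edges_nil]
      rw [List.range_succ, List.range_zero]
      simp only [List.map_append, List.map_cons, List.map_nil, List.nil_append]
      rw [show M - 1 - 0 + 0 = M - 1 - 0 from by omega,
        show M - 1 - 0 + 1 = M from by omega]
  | succ k ih =>
      simp only [cycWalk, Walk.edges_cons]
      rw [ih (by omega)]
      conv_rhs => rw [show k + 1 + 1 = (k + 1) + 1 from rfl, List.range_succ_eq_map,
        List.map_cons, List.map_map]
      rw [show M - 1 - (k+1) + 0 = M - 1 - (k+1) from by omega]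
      rw [show M - 1 - (k+1) + 1 = M - 1 - k from by omega]
      congr 1
      apply List.map_congr_left
      intro j hj
      simp only [Function.comp_apply]
      rw [show M - 1 - k + j = M - 1 - (k+1) + Nat.succ j from by omega]

end

lemma mod_small_inj {M a b : ℕ} (hM : 0 < M) (ha : 0 < a) (hb : 0 < b)
    (ha' : a ≤ M) (hb' : b ≤ M) (h : a % M = b % M) : a = b := by
  by_cases hA : a = M
  · by_cases hB : b = M
    · omega
    · rw [hA, Nat.mod_self, Nat.mod_eq_of_lt (by omega)] at h; omega
  · by_cases hB : b = M
    · rw [hB, Nat.mod_self, Nat.mod_eq_of_lt (by omega)] at h; omega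
    · rw [Nat.mod_eq_of_lt (by omega), Nat.mod_eq_of_lt (by omega)] at h; omega

lemma cycleGraph_ham (M : ℕ) (hM : 3 ≤ M) :
    ∃ (a : Fin M) (w : (cycleGraph M).Walk a a), w.IsHamiltonianCycle := by
  have hM2 : M - 2 < M := by omega
  set p0 := cycWalk hM (M - 2) hM2 with hp0
  have hsup : p0.support = (List.range M).map (fun j => gv M hM (1 + j)) := by
    rw [hp0, cycWalk_support, show M - 2 + 2 = M from by omega]
    apply List.map_congr_left
    intro j hj
    rw [show M - 1 - (M - 2) + j = 1 + j from by omega]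
  have hedg : p0.edges
      = (List.range (M - 1)).map (fun j => s(gv M hM (1 + j), gv M hM (1 + j + 1))) := by
    rw [hp0, cycWalk_edges, show M - 2 + 1 = M - 1 from by omega]
    apply List.map_congr_left
    intro j hj
    rw [show M - 1 - (M - 2) + j = 1 + j from by omega]
  have hnodup : p0.support.Nodup := by
    rw [hsup]
    apply List.Nodup.map_on _ List.nodup_range
    intro i hi j hj hij
    rw [List.mem_range] at hi hj
    have hv := congrArg Fin.val hij
    simp only [gv] at hv
    have := mod_small_inj (show 0 < M by omega) (show 0 < 1 + i by omega)
      (show 0 < 1 + j by omega) (by omega) (by omega) hv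
    omega
  have hpath : p0.IsPath := Walk.IsPath.mk' hnodup
  have hmem : ∀ a : Fin M, a ∈ p0.support := by
    intro a
    have hlt := a.isLt
    rw [hsup, List.mem_map]
    by_cases ha : a.val = 0
    · refine ⟨M - 1, by rw [List.mem_range]; omega, ?_⟩
      apply Fin.ext
      show (1 + (M - 1)) % M = a.val
      rw [show 1 + (M - 1) = M from by omega, Nat.mod_self]
      omega
    · refine ⟨a.val - 1, by rw [List.mem_range]; omega, ?_⟩
      apply Fin.ext
      show (1 + (a.val - 1)) % M = a.val
      rw [show 1 + (a.val - 1) = a.val from by omega]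
      exact Nat.mod_eq_of_lt hlt
  have hadj : (cycleGraph M).Adj (gv M hM M) (gv M hM 1) := by
    have h0 : gv M hM M = gv M hM 0 := by
      apply Fin.ext
      show M % M = 0 % M
      rw [Nat.mod_self, Nat.zero_mod]
    rw [h0]
    exact gv_adj' hM (by omega)
  have hne : s(gv M hM M, gv M hM 1) ∉ p0.edges := by
    rw [hedg]
    intro hmem'
    rw [List.mem_map] at hmem'
    obtain ⟨j, hj, heq⟩ := hmem'
    rw [List.mem_range] at hj
    have hMv : (gv M hM M).val = 0 := by show M % M = 0; exact Nat.mod_self M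
    have h1v : (gv M hM 1).val = 1 := gv_val (by omega)
    rw [Sym2.eq_iff] at heq
    rcases heq with ⟨h1, h2⟩ | ⟨h1, h2⟩
    · have hv := congrArg Fin.val h1
      rw [gv_val (show 1 + j < M from by omega), hMv] at hv
      omega
    · have hv2 := congrArg Fin.val h1
      rw [gv_val (show 1 + j < M from by omega), h1v] at hv2
      have hj0 : j = 0 := by omega
      have hv1 := congrArg Fin.val h2
      rw [hj0] at hv1
      rw [gv_val (show 1 + 0 + 1 < M from by omega), hMv] at hv1
      omega
  have hcopy : gv M hM (M - 1 - (M - 2)) = gv M hM 1 := gv_congr (by omega)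
  have hpc : (p0.copy hcopy rfl).IsPath := by rw [Walk.isPath_copy]; exact hpath
  have hcyc : (Walk.cons hadj (p0.copy hcopy rfl)).IsCycle := by
    exact Path.cons_isCycle ⟨p0.copy hcopy rfl, hpc⟩ hadj
      (by rw [Walk.edges_copy]; exact hne)
  refine ⟨gv M hM M, Walk.cons hadj (p0.copy hcopy rfl), ?_⟩
  rw [Walk.isHamiltonianCycle_iff_isCycle_and_support_count_tail_eq_one]
  refine ⟨hcyc, ?_⟩
  intro a
  rw [Walk.support_cons, List.tail_cons, Walk.support_copy]
  exact List.count_eq_one_of_mem hnodup (hmem a)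

section
variable {N : ℕ} [NeZero N]

lemma map_equiv_adj {α β : Type*} (G : SimpleGraph α) (e : α ≃ β) (u v : β) :
    (G.map e.toEmbedding).Adj u v ↔ G.Adj (e.symm u) (e.symm v) := by
  rw [map_adj]
  constructor
  · rintro ⟨a, b, h, rfl, rfl⟩
    simpa using h
  · intro h
    exact ⟨e.symm u, e.symm v, h, e.apply_symm_apply u, e.apply_symm_apply v⟩

lemma fin_one_ne_zero' (hN : 3 ≤ N) : (1 : Fin N) ≠ 0 := by
  intro h
  have h2 := congrArg Fin.val h
  rw [Fin.val_one'] at h2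
  rw [Nat.mod_eq_of_lt (by omega)] at h2
  simp at h2

lemma fin_two_ne_zero' (hN : 3 ≤ N) : (1 + 1 : Fin N) ≠ 0 := by
  have hv : ((1 + 1 : Fin N)).val = 2 := by
    show ((1 : Fin N).val + (1 : Fin N).val) % N = 2
    rw [Fin.val_one', Nat.mod_eq_of_lt (show 1 < N by omega)]
    exact Nat.mod_eq_of_lt (by omega)
  intro h
  rw [h] at hv
  simp at hv

lemma fin_ne_add_one (hN : 3 ≤ N) (x : Fin N) : x ≠ x + 1 :=
  fun h => fin_one_ne_zero' hN (left_eq_add.mp h)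

lemma fin_ne_add_two (hN : 3 ≤ N) (x : Fin N) : x ≠ x + 1 + 1 :=
  fun h => fin_two_ne_zero' hN (left_eq_add.mp (by rwa [add_assoc] at h))

def torusStepV (u : Fin N × Fin N) : Fin N × Fin N :=
  if u.1 + u.2 + 1 = 0 then (u.1 + 1, u.2) else (u.1, u.2 + 1)

lemma swap_torusStep (u : Fin N × Fin N) :
    Prod.swap (torusStep (Prod.swap u)) = torusStepV u := by
  obtain ⟨x, y⟩ := u
  simp only [torusStep, torusStepV, Prod.swap_prod_mk, apply_ite Prod.swap]
  rw [add_comm y x]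

def torusH1 (N : ℕ) (hN : 3 ≤ N) : SimpleGraph (Fin N × Fin N) :=
  (cycleGraph (N * N)).map (torusEquiv N hN).toEmbedding

def torusH2 (N : ℕ) (hN : 3 ≤ N) : SimpleGraph (Fin N × Fin N) :=
  (torusH1 N hN).map (Equiv.prodComm (Fin N) (Fin N)).toEmbedding

lemma torusH1_adj (hN : 3 ≤ N) (u v : Fin N × Fin N) :
    (torusH1 N hN).Adj u v ↔ v = torusStep u ∨ u = torusStep v := by
  haveI : NeZero (N * N) := ⟨by positivity⟩
  have hs : ∀ w : Fin N × Fin N,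
      (torusEquiv N hN).symm (torusStep w) = (torusEquiv N hN).symm w + 1 :=
    fun w => torus_succ hN w
  rw [torusH1, map_equiv_adj, cyc_adj_iff (by nlinarith), ← hs u, ← hs v]
  simp only [EmbeddingLike.apply_eq_iff_eq]

lemma torusH2_adj (hN : 3 ≤ N) (u v : Fin N × Fin N) :
    (torusH2 N hN).Adj u v ↔ v = torusStepV u ∨ u = torusStepV v := by
  rw [torusH2, map_equiv_adj, torusH1_adj hN]
  simp only [Equiv.prodComm_symm, Equiv.prodComm_apply]
  constructor
  · rintro (h | h)
    · left
      rw [← swap_torusStep u, ← h, Prod.swap_swap]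
    · right
      rw [← swap_torusStep v, ← h, Prod.swap_swap]
  · rintro (rfl | rfl)
    · left
      rw [← swap_torusStep u, Prod.swap_swap]
    · right
      rw [← swap_torusStep v, Prod.swap_swap]

lemma stepNe1 (hN : 3 ≤ N) (u : Fin N × Fin N) : torusStep u ≠ torusStepV u := by
  obtain ⟨x, y⟩ := u
  simp only [torusStep, torusStepV]
  split_ifs with h
  · intro he
    exact fin_ne_add_one hN x (Prod.ext_iff.mp he).1
  · intro he
    exact fin_ne_add_one hN y (Prod.ext_iff.mp he).2

lemma stepNe2 (hN : 3 ≤ N) (u : Fin N × Fin N) : u ≠ torusStepV (torusStep u) := by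
  obtain ⟨x, y⟩ := u
  simp only [torusStep]
  split_ifs with h
  · simp only [torusStepV]
    have key : x + (y + 1) + 1 = (x + y + 1) + 1 := by abel
    have hc : ¬ ((x, y + 1).1 + (x, y + 1).2 + 1 = 0) := by
      intro hh
      simp only at hh
      rw [key, h, zero_add] at hh
      exact fin_one_ne_zero' hN hh
    rw [if_neg hc]
    intro he
    exact fin_ne_add_two hN y (Prod.ext_iff.mp he).2
  · simp only [torusStepV]
    split_ifs with h2
    · intro he
      exact fin_ne_add_two hN x (Prod.ext_iff.mp he).1
    · intro he
      exact fin_ne_add_one hN x (Prod.ext_iff.mp he).1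

lemma stepNe3 (hN : 3 ≤ N) (u : Fin N × Fin N) : u ≠ torusStep (torusStepV u) := by
  obtain ⟨x, y⟩ := u
  simp only [torusStepV]
  split_ifs with h
  · simp only [torusStep]
    have key : (x + 1) + y + 1 = (x + y + 1) + 1 := by abel
    have hc : ¬ ((x + 1, y).1 + (x + 1, y).2 + 1 = 0) := by
      intro hh
      simp only at hh
      rw [key, h, zero_add] at hh
      exact fin_one_ne_zero' hN hh
    rw [if_neg hc]
    intro he
    exact fin_ne_add_two hN x (Prod.ext_iff.mp he).1
  · simp only [torusStep]
    split_ifs with h2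
    · intro he
      exact fin_ne_add_two hN y (Prod.ext_iff.mp he).2
    · intro he
      exact fin_ne_add_one hN y (Prod.ext_iff.mp he).2

lemma torus_disjoint (hN : 3 ≤ N) : Disjoint (torusH1 N hN) (torusH2 N hN) := by
  rw [disjoint_iff]
  ext u v
  simp only [inf_adj, bot_adj, iff_false, not_and]
  intro h1 h2
  rw [torusH1_adj hN] at h1
  rw [torusH2_adj hN] at h2
  rcases h1 with rfl | rfl
  · rcases h2 with h | h
    · exact stepNe1 hN u h
    · exact stepNe2 hN u h
  · rcases h2 with h | h
    · exact stepNe2 hN v h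
    · exact stepNe1 hN v h

lemma torus_union (hN : 3 ≤ N) :
    torusH1 N hN ⊔ torusH2 N hN = cycleGraph N □ cycleGraph N := by
  ext u v
  obtain ⟨x, y⟩ := u
  obtain ⟨x', y'⟩ := v
  rw [sup_adj, torusH1_adj hN, torusH2_adj hN, boxProd_adj]
  rw [cyc_adj_iff (by omega), cyc_adj_iff (by omega)]
  simp only [torusStep, torusStepV]
  split_ifs with h1 h2 h2 <;> simp only [Prod.mk.injEq] <;> tauto

end

theorem torus_two_hamiltonian_cycles (n : ℕ) (hn : 3 ≤ n) (hodd : Odd n) :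
    ∃ H₁ H₂ : SimpleGraph (Fin n × Fin n),
      Disjoint H₁ H₂ ∧
      H₁ ⊔ H₂ = SimpleGraph.boxProd (SimpleGraph.cycleGraph n) (SimpleGraph.cycleGraph n) ∧
      (∃ (a : Fin n × Fin n) (w : H₁.Walk a a), w.IsHamiltonianCycle) ∧
      (∃ (a : Fin n × Fin n) (w : H₂.Walk a a), w.IsHamiltonianCycle) := by
  haveI : NeZero n := ⟨by omega⟩
  obtain ⟨a, w, hw⟩ := cycleGraph_ham (n * n) (by nlinarith)
  let e := torusEquiv n hn
  let f1 : cycleGraph (n * n) →g torusH1 n hn :=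
    ⟨e, fun {a b} h => by rw [torusH1, map_adj]; exact ⟨a, b, h, rfl, rfl⟩⟩
  let f2 : torusH1 n hn →g torusH2 n hn :=
    ⟨Equiv.prodComm (Fin n) (Fin n), fun {a b} h => by rw [torusH2, map_adj]; exact ⟨a, b, h, rfl, rfl⟩⟩
  refine ⟨torusH1 n hn, torusH2 n hn, torus_disjoint hn, torus_union hn, ?_, ?_⟩
  · exact ⟨f1 a, w.map f1, hw.map (f := f1) e.bijective⟩
  · exact ⟨f2 (f1 a), (w.map f1).map f2,
      (hw.map (f := f1) e.bijective).map (f := f2) (Equiv.prodComm (Fin n) (Fin n)).bijective⟩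
end

section
/- The complete graph K_9 cannot be partitioned into three edge-disjoint subgraphs each isomorphic to P_3 □ P_3. -/
open SimpleGraph

lemma grid_coloring : ∃ c : Fin 3 × Fin 3 → Bool,
    ∀ u v, (pathGraph 3 □ pathGraph 3).Adj u v → c u ≠ c v := by
  refine ⟨fun p => (p.1.val + p.2.val) % 2 == 0, ?_⟩
  simp only [boxProd_adj, pathGraph_adj]
  decide

theorem no_K9_grid_design :
    ¬ ∃ f : Fin 3 → SimpleGraph (Fin 9),
      (∀ i, Nonempty (f i ≃g (pathGraph 3 □ pathGraph 3))) ∧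
      (Pairwise fun i j => Disjoint (f i) (f j)) ∧
      (⨆ i, f i) = ⊤ := by
  rintro ⟨f, hiso, -, htop⟩
  obtain ⟨c, hc⟩ := grid_coloring
  -- pull back coloring along each iso
  have hcol : ∀ i : Fin 3, ∃ d : Fin 9 → Bool,
      ∀ u v, (f i).Adj u v → d u ≠ d v := by
    intro i
    obtain ⟨e⟩ := hiso i
    exact ⟨fun v => c (e v), fun u v h => hc _ _ (e.map_adj_iff.mpr h)⟩
  choose d hd using hcol
  have hninj : ¬ Function.Injective (fun v : Fin 9 => fun i : Fin 3 => d i v) := by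
    intro hinj
    have := Fintype.card_le_of_injective _ hinj
    simp at this
  rw [Function.not_injective_iff] at hninj
  obtain ⟨u, v, huv, hne⟩ := hninj
  have hadj : (⨆ i, f i).Adj u v := htop ▸ (by simpa using hne)
  rw [iSup_adj] at hadj
  obtain ⟨i, hi⟩ := hadj
  exact hd i u v hi (congrFun huv i)
end

section
/- In any partition of K_9 into three edge-disjoint copies of P_3 □ P_3 with center vertices v_1, v_2, v_3, no two of v_1, v_2, v_3 are adjacent in any of the three copies; since v_1, v_2, v_3 are distinct, this contradicts that every pair of vertices of K_9 is adjacent in exactly one copy. -/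
open SimpleGraph

instance : DecidableRel (pathGraph 3).Adj := fun _ _ =>
  decidable_of_iff _ (SimpleGraph.pathGraph_adj).symm

instance : DecidableRel (pathGraph 3 □ pathGraph 3).Adj := fun _ _ =>
  decidable_of_iff _ (SimpleGraph.boxProd_adj).symm

lemma pp_center_deg : (pathGraph 3 □ pathGraph 3).degree (1,1) = 4 := by decide

lemma pp_deg_ge : ∀ a : Fin 3 × Fin 3, 2 ≤ (pathGraph 3 □ pathGraph 3).degree a := by decide

lemma pp_not_adj_22 : ∀ a b : Fin 3 × Fin 3, (pathGraph 3 □ pathGraph 3).degree a ≤ 2 →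
    (pathGraph 3 □ pathGraph 3).degree b ≤ 2 → ¬(pathGraph 3 □ pathGraph 3).Adj a b := by decide

lemma pp_not_adj_42 : ∀ a b : Fin 3 × Fin 3, (pathGraph 3 □ pathGraph 3).degree a = 4 →
    (pathGraph 3 □ pathGraph 3).degree b ≤ 2 → ¬(pathGraph 3 □ pathGraph 3).Adj a b := by decide

theorem center_vertices_contradiction (f : Fin 3 → SimpleGraph (Fin 9))
    (φ : ∀ i, f i ≃g (pathGraph 3 □ pathGraph 3))
    (hdisj : Pairwise fun i j => Disjoint (f i) (f j))
    (hcover : (⨆ i, f i) = ⊤)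
    (v : Fin 3 → Fin 9) (hv : ∀ i, v i = (φ i).symm (1, 1)) :
    (∀ i j k : Fin 3, j ≠ k → ¬ (f i).Adj (v j) (v k)) ∧
      Function.Injective v ∧ False := by
  classical
  haveI : ∀ i, DecidableRel (f i).Adj := fun i => Classical.decRel _
  -- degrees transfer along the isomorphisms
  have hdeg : ∀ i x, (f i).degree x = (pathGraph 3 □ pathGraph 3).degree ((φ i) x) := by
    intro i x
    rw [← card_neighborSet_eq_degree, ← card_neighborSet_eq_degree]
    exact Fintype.card_congr ((φ i).mapNeighborSet x)
  have hge : ∀ i x, 2 ≤ (f i).degree x := fun i x => by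
    rw [hdeg]; exact pp_deg_ge _
  -- disjointness of adjacency
  have hD : ∀ i j : Fin 3, i ≠ j → ∀ a b, (f i).Adj a b → ¬ (f j).Adj a b := by
    intro i j hij a b h1 h2
    have h := disjoint_iff.mp (hdisj hij)
    have : (f i ⊓ f j).Adj a b := ⟨h1, h2⟩
    rw [h] at this
    simpa using this
  -- sum of degrees is 8
  have hsum : ∀ x, (f 0).degree x + (f 1).degree x + (f 2).degree x = 8 := by
    intro x
    have hun : (⊤ : SimpleGraph (Fin 9)).neighborFinset x
        = ((f 0).neighborFinset x ∪ (f 1).neighborFinset x) ∪ (f 2).neighborFinset x := by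
      ext y
      simp only [mem_neighborFinset, Finset.mem_union, ← hcover, iSup_adj]
      constructor
      · rintro ⟨i, h⟩; fin_cases i <;> tauto
      · rintro ((h | h) | h); exacts [⟨0, h⟩, ⟨1, h⟩, ⟨2, h⟩]
    have hd01 : Disjoint ((f 0).neighborFinset x) ((f 1).neighborFinset x) := by
      rw [Finset.disjoint_left]
      intro y hy hy'
      exact hD 0 1 (by decide) x y (by simpa [mem_neighborFinset] using hy)
        (by simpa [mem_neighborFinset] using hy')
    have hd2 : Disjoint ((f 0).neighborFinset x ∪ (f 1).neighborFinset x)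
        ((f 2).neighborFinset x) := by
      rw [Finset.disjoint_left]
      intro y hy hy'
      rcases Finset.mem_union.mp hy with h | h
      · exact hD 0 2 (by decide) x y (by simpa [mem_neighborFinset] using h)
          (by simpa [mem_neighborFinset] using hy')
      · exact hD 1 2 (by decide) x y (by simpa [mem_neighborFinset] using h)
          (by simpa [mem_neighborFinset] using hy')
    have htop : ((⊤ : SimpleGraph (Fin 9)).neighborFinset x).card = 8 := by
      have : (⊤ : SimpleGraph (Fin 9)).neighborFinset x = Finset.univ.erase x := by
        ext y
        simp [mem_neighborFinset, ne_comm, eq_comm]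
      rw [this, Finset.card_erase_of_mem (Finset.mem_univ x)]
      simp
    have := htop
    rw [hun, Finset.card_union_of_disjoint hd2, Finset.card_union_of_disjoint hd01] at this
    exact this
  -- v i is the center of f i
  have hc : ∀ i, (f i).degree (v i) = 4 := by
    intro i
    rw [hdeg, hv i, RelIso.apply_symm_apply]
    exact pp_center_deg
  -- v j is a corner in f i whenever i ≠ j
  have hcorner : ∀ i j : Fin 3, i ≠ j → (f i).degree (v j) ≤ 2 := by
    intro i j hij
    have hs := hsum (v j)
    have h0 := hge 0 (v j); have h1 := hge 1 (v j); have h2 := hge 2 (v j)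
    have hcj := hc j
    have hcase : (i = 0 ∧ j = 1) ∨ (i = 0 ∧ j = 2) ∨ (i = 1 ∧ j = 0) ∨ (i = 1 ∧ j = 2)
        ∨ (i = 2 ∧ j = 0) ∨ (i = 2 ∧ j = 1) := by omega
    rcases hcase with ⟨hi, hj⟩ | ⟨hi, hj⟩ | ⟨hi, hj⟩ | ⟨hi, hj⟩ | ⟨hi, hj⟩ | ⟨hi, hj⟩ <;>
      subst hi <;> subst hj <;> omega
  have part1 : ∀ i j k : Fin 3, j ≠ k → ¬ (f i).Adj (v j) (v k) := by
    intro i j k hjk hadj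
    have hadj' : (pathGraph 3 □ pathGraph 3).Adj ((φ i) (v j)) ((φ i) (v k)) :=
      (φ i).map_adj_iff.mpr hadj
    by_cases hji : j = i
    · subst hji
      have h4 : (pathGraph 3 □ pathGraph 3).degree ((φ j) (v j)) = 4 := by
        rw [← hdeg]; exact hc j
      have h2 : (pathGraph 3 □ pathGraph 3).degree ((φ j) (v k)) ≤ 2 := by
        rw [← hdeg]; exact hcorner j k hjk
      exact pp_not_adj_42 _ _ h4 h2 hadj'
    · by_cases hki : k = i
      · subst hki
        have h4 : (pathGraph 3 □ pathGraph 3).degree ((φ k) (v k)) = 4 := by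
          rw [← hdeg]; exact hc k
        have h2 : (pathGraph 3 □ pathGraph 3).degree ((φ k) (v j)) ≤ 2 := by
          rw [← hdeg]; exact hcorner k j (Ne.symm hjk)
        exact pp_not_adj_42 _ _ h4 h2 hadj'.symm
      · have h2j : (pathGraph 3 □ pathGraph 3).degree ((φ i) (v j)) ≤ 2 := by
          rw [← hdeg]; exact hcorner i j (fun h => hji h.symm)
        have h2k : (pathGraph 3 □ pathGraph 3).degree ((φ i) (v k)) ≤ 2 := by
          rw [← hdeg]; exact hcorner i k (fun h => hki h.symm)
        exact pp_not_adj_22 _ _ h2j h2k hadj'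
  have part2 : Function.Injective v := by
    intro a b hab
    by_contra hne
    have h4 : (f a).degree (v a) = 4 := hc a
    have h2 : (f a).degree (v b) ≤ 2 := hcorner a b hne
    rw [← hab] at h2
    omega
  refine ⟨part1, part2, ?_⟩
  have hne01 : v 0 ≠ v 1 := fun h => absurd (part2 h) (by decide)
  have htopadj : (⊤ : SimpleGraph (Fin 9)).Adj (v 0) (v 1) := hne01
  rw [← hcover] at htopadj
  obtain ⟨i, hi⟩ := (iSup_adj).mp htopadj
  exact part1 i 0 1 (by decide) hi
end

section
/- In F = F_2[x]/(x^4+x+1), for every i with 0 ≤ i ≤ 4, the four elements x^{3i}, x^{13+3i}, x^{11+3i}, x^{3+3i} (exponents mod 15) form a basis of F over F_2. -/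
open Polynomial

noncomputable section PFB

abbrev qpoly : (ZMod 2)[X] := X ^ 4 + X + 1

lemma qpoly_monic : qpoly.Monic := by unfold qpoly; monicity!

lemma qpoly_natDegree : qpoly.natDegree = 4 := by unfold qpoly; compute_degree!

def Bb : Module.Basis (Fin 4) (ZMod 2) (AdjoinRoot qpoly) :=
  ((AdjoinRoot.powerBasis' qpoly_monic).basis).reindex (finCongr qpoly_natDegree)

lemma Bb_apply (k : Fin 4) : Bb k = (AdjoinRoot.root qpoly) ^ (k : ℕ) := by
  rw [Bb, Module.Basis.reindex_apply, (AdjoinRoot.powerBasis' qpoly_monic).basis_eq_pow]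
  simp
  rfl

lemma htwo : (2 : AdjoinRoot qpoly) = 0 := by
  calc (2 : AdjoinRoot qpoly) = algebraMap (ZMod 2) (AdjoinRoot qpoly) 2 :=
        (map_ofNat _ 2).symm
    _ = 0 := by rw [show (2 : ZMod 2) = 0 from rfl, map_zero]

lemma hr4 : (AdjoinRoot.root qpoly) ^ 4 = AdjoinRoot.root qpoly + 1 := by
  have h : (AdjoinRoot.root qpoly) ^ 4 + AdjoinRoot.root qpoly + 1 = 0 := by
    have := AdjoinRoot.eval₂_root qpoly
    simpa using this
  linear_combination h - (AdjoinRoot.root qpoly + 1) * htwo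

end PFB

noncomputable section PFB2

abbrev rr : AdjoinRoot qpoly := AdjoinRoot.root qpoly

lemma coords {e : ℕ} {c : Fin 4 → ZMod 2}
    (h : rr ^ e = ∑ j, c j • Bb j) :
    Bb.equivFun (rr ^ e) = c := by
  rw [h, ← Bb.equivFun_symm_apply, LinearEquiv.apply_symm_apply]

lemma coord0 : Bb.equivFun (rr ^ 0) = ![1,0,0,0] := by
  apply coords
  simp only [Fin.sum_univ_four, Bb_apply, Matrix.cons_val]
  norm_num [show ((0:Fin 4):ℕ)=0 from rfl, show ((1:Fin 4):ℕ)=1 from rfl, show ((2:Fin 4):ℕ)=2 from rfl, show ((3:Fin 4):ℕ)=3 from rfl]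

lemma coord1 : Bb.equivFun (rr ^ 1) = ![0,1,0,0] := by
  apply coords
  simp only [Fin.sum_univ_four, Bb_apply, Matrix.cons_val]
  norm_num [show ((0:Fin 4):ℕ)=0 from rfl, show ((1:Fin 4):ℕ)=1 from rfl, show ((2:Fin 4):ℕ)=2 from rfl, show ((3:Fin 4):ℕ)=3 from rfl]

lemma coord2 : Bb.equivFun (rr ^ 2) = ![0,0,1,0] := by
  apply coords
  simp only [Fin.sum_univ_four, Bb_apply, Matrix.cons_val]
  norm_num [show ((0:Fin 4):ℕ)=0 from rfl, show ((1:Fin 4):ℕ)=1 from rfl, show ((2:Fin 4):ℕ)=2 from rfl, show ((3:Fin 4):ℕ)=3 from rfl]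

lemma coord3 : Bb.equivFun (rr ^ 3) = ![0,0,0,1] := by
  apply coords
  simp only [Fin.sum_univ_four, Bb_apply, Matrix.cons_val]
  norm_num [show ((0:Fin 4):ℕ)=0 from rfl, show ((1:Fin 4):ℕ)=1 from rfl, show ((2:Fin 4):ℕ)=2 from rfl, show ((3:Fin 4):ℕ)=3 from rfl]

lemma coord4 : Bb.equivFun (rr ^ 4) = ![1,1,0,0] := by
  apply coords
  simp only [Fin.sum_univ_four, Bb_apply, Matrix.cons_val]
  norm_num [show ((0:Fin 4):ℕ)=0 from rfl, show ((1:Fin 4):ℕ)=1 from rfl, show ((2:Fin 4):ℕ)=2 from rfl, show ((3:Fin 4):ℕ)=3 from rfl]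
  linear_combination hr4

lemma coord5 : Bb.equivFun (rr ^ 5) = ![0,1,1,0] := by
  apply coords
  simp only [Fin.sum_univ_four, Bb_apply, Matrix.cons_val]
  norm_num [show ((0:Fin 4):ℕ)=0 from rfl, show ((1:Fin 4):ℕ)=1 from rfl, show ((2:Fin 4):ℕ)=2 from rfl, show ((3:Fin 4):ℕ)=3 from rfl]
  linear_combination rr * hr4

lemma coord6 : Bb.equivFun (rr ^ 6) = ![0,0,1,1] := by
  apply coords
  simp only [Fin.sum_univ_four, Bb_apply, Matrix.cons_val]
  norm_num [show ((0:Fin 4):ℕ)=0 from rfl, show ((1:Fin 4):ℕ)=1 from rfl, show ((2:Fin 4):ℕ)=2 from rfl, show ((3:Fin 4):ℕ)=3 from rfl]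
  linear_combination rr ^ 2 * hr4

lemma coord7 : Bb.equivFun (rr ^ 7) = ![1,1,0,1] := by
  apply coords
  simp only [Fin.sum_univ_four, Bb_apply, Matrix.cons_val]
  norm_num [show ((0:Fin 4):ℕ)=0 from rfl, show ((1:Fin 4):ℕ)=1 from rfl, show ((2:Fin 4):ℕ)=2 from rfl, show ((3:Fin 4):ℕ)=3 from rfl]
  linear_combination (1 + rr ^ 3) * hr4

lemma coord8 : Bb.equivFun (rr ^ 8) = ![1,0,1,0] := by
  apply coords
  simp only [Fin.sum_univ_four, Bb_apply, Matrix.cons_val]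
  norm_num [show ((0:Fin 4):ℕ)=0 from rfl, show ((1:Fin 4):ℕ)=1 from rfl, show ((2:Fin 4):ℕ)=2 from rfl, show ((3:Fin 4):ℕ)=3 from rfl]
  linear_combination (1 + rr + rr ^ 4) * hr4 + rr * htwo

lemma coord9 : Bb.equivFun (rr ^ 9) = ![0,1,0,1] := by
  apply coords
  simp only [Fin.sum_univ_four, Bb_apply, Matrix.cons_val]
  norm_num [show ((0:Fin 4):ℕ)=0 from rfl, show ((1:Fin 4):ℕ)=1 from rfl, show ((2:Fin 4):ℕ)=2 from rfl, show ((3:Fin 4):ℕ)=3 from rfl]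
  linear_combination (rr + rr ^ 2 + rr ^ 5) * hr4 + rr ^ 2 * htwo

lemma coord10 : Bb.equivFun (rr ^ 10) = ![1,1,1,0] := by
  apply coords
  simp only [Fin.sum_univ_four, Bb_apply, Matrix.cons_val]
  norm_num [show ((0:Fin 4):ℕ)=0 from rfl, show ((1:Fin 4):ℕ)=1 from rfl, show ((2:Fin 4):ℕ)=2 from rfl, show ((3:Fin 4):ℕ)=3 from rfl]
  linear_combination (1 + rr ^ 2 + rr ^ 3 + rr ^ 6) * hr4 + rr ^ 3 * htwo

lemma coord11 : Bb.equivFun (rr ^ 11) = ![0,1,1,1] := by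
  apply coords
  simp only [Fin.sum_univ_four, Bb_apply, Matrix.cons_val]
  norm_num [show ((0:Fin 4):ℕ)=0 from rfl, show ((1:Fin 4):ℕ)=1 from rfl, show ((2:Fin 4):ℕ)=2 from rfl, show ((3:Fin 4):ℕ)=3 from rfl]
  linear_combination (2 + rr + rr ^ 3 + rr ^ 4 + rr ^ 7) * hr4 + (1 + rr) * htwo

lemma coord12 : Bb.equivFun (rr ^ 12) = ![1,1,1,1] := by
  apply coords
  simp only [Fin.sum_univ_four, Bb_apply, Matrix.cons_val]
  norm_num [show ((0:Fin 4):ℕ)=0 from rfl, show ((1:Fin 4):ℕ)=1 from rfl, show ((2:Fin 4):ℕ)=2 from rfl, show ((3:Fin 4):ℕ)=3 from rfl]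
  linear_combination (1 + 2 * rr + rr ^ 2 + rr ^ 4 + rr ^ 5 + rr ^ 8) * hr4 + (rr + rr ^ 2) * htwo

lemma coord13 : Bb.equivFun (rr ^ 13) = ![1,0,1,1] := by
  apply coords
  simp only [Fin.sum_univ_four, Bb_apply, Matrix.cons_val]
  norm_num [show ((0:Fin 4):ℕ)=0 from rfl, show ((1:Fin 4):ℕ)=1 from rfl, show ((2:Fin 4):ℕ)=2 from rfl, show ((3:Fin 4):ℕ)=3 from rfl]
  linear_combination (1 + rr + 2 * rr ^ 2 + rr ^ 3 + rr ^ 5 + rr ^ 6 + rr ^ 9) * hr4 + (rr + rr ^ 2 + rr ^ 3) * htwo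

lemma coord14 : Bb.equivFun (rr ^ 14) = ![1,0,0,1] := by
  apply coords
  simp only [Fin.sum_univ_four, Bb_apply, Matrix.cons_val]
  norm_num [show ((0:Fin 4):ℕ)=0 from rfl, show ((1:Fin 4):ℕ)=1 from rfl, show ((2:Fin 4):ℕ)=2 from rfl, show ((3:Fin 4):ℕ)=3 from rfl]
  linear_combination (3 + rr + rr ^ 2 + 2 * rr ^ 3 + rr ^ 4 + rr ^ 6 + rr ^ 7 + rr ^ 10) * hr4 + (1 + 2 * rr + rr ^ 2 + rr ^ 3) * htwo

lemma hfinrank : Module.finrank (ZMod 2) (AdjoinRoot qpoly) = 4 := by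
  rw [(AdjoinRoot.powerBasis' qpoly_monic).finrank]
  exact qpoly_natDegree

lemma main_aux (a b c d : ℕ) (w : Fin 4 → Fin 4 → ZMod 2)
    (ha : Bb.equivFun (rr ^ a) = w 0) (hb : Bb.equivFun (rr ^ b) = w 1)
    (hc : Bb.equivFun (rr ^ c) = w 2) (hd : Bb.equivFun (rr ^ d) = w 3)
    (hw : LinearIndependent (ZMod 2) w) :
    LinearIndependent (ZMod 2) ![rr ^ a, rr ^ b, rr ^ c, rr ^ d] ∧
      Submodule.span (ZMod 2) ({rr ^ a, rr ^ b, rr ^ c, rr ^ d} : Set (AdjoinRoot qpoly)) = ⊤ := by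
  have hcomp : (Bb.equivFun.toLinearMap : AdjoinRoot qpoly →ₗ[ZMod 2] (Fin 4 → ZMod 2)) ∘
      ![rr ^ a, rr ^ b, rr ^ c, rr ^ d] = w := by
    funext j
    fin_cases j <;> assumption
  have hli : LinearIndependent (ZMod 2) ![rr ^ a, rr ^ b, rr ^ c, rr ^ d] := by
    rw [← LinearMap.linearIndependent_iff (Bb.equivFun.toLinearMap)
      (LinearMap.ker_eq_bot.mpr Bb.equivFun.injective), hcomp]
    exact hw
  refine ⟨hli, ?_⟩
  have hrange : ({rr ^ a, rr ^ b, rr ^ c, rr ^ d} : Set (AdjoinRoot qpoly)) =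
      Set.range ![rr ^ a, rr ^ b, rr ^ c, rr ^ d] := by
    ext y
    simp [Matrix.range_cons, Matrix.range_empty]
    tauto
  rw [hrange]
  exact hli.span_eq_top_of_card_eq_finrank (by simp [hfinrank])

end PFB2

theorem powers_form_basis (i : ℕ) (hi : i ≤ 4) :
    LinearIndependent (ZMod 2)
        ![(AdjoinRoot.root (X ^ 4 + X + 1 : (ZMod 2)[X])) ^ (3 * i % 15),
          (AdjoinRoot.root (X ^ 4 + X + 1 : (ZMod 2)[X])) ^ ((13 + 3 * i) % 15),
          (AdjoinRoot.root (X ^ 4 + X + 1 : (ZMod 2)[X])) ^ ((11 + 3 * i) % 15),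
          (AdjoinRoot.root (X ^ 4 + X + 1 : (ZMod 2)[X])) ^ ((3 + 3 * i) % 15)] ∧
      Submodule.span (ZMod 2)
          ({(AdjoinRoot.root (X ^ 4 + X + 1 : (ZMod 2)[X])) ^ (3 * i % 15),
            (AdjoinRoot.root (X ^ 4 + X + 1 : (ZMod 2)[X])) ^ ((13 + 3 * i) % 15),
            (AdjoinRoot.root (X ^ 4 + X + 1 : (ZMod 2)[X])) ^ ((11 + 3 * i) % 15),
            (AdjoinRoot.root (X ^ 4 + X + 1 : (ZMod 2)[X])) ^ ((3 + 3 * i) % 15)} :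
            Set (AdjoinRoot (X ^ 4 + X + 1 : (ZMod 2)[X]))) = ⊤ := by
  interval_cases i <;> simp only [Nat.reduceMul, Nat.reduceAdd, Nat.reduceMod]
  · exact main_aux 0 13 11 3 ![![1,0,0,0], ![1,0,1,1], ![0,1,1,1], ![0,0,0,1]] coord0 coord13 coord11 coord3 (by rw [Fintype.linearIndependent_iff]; decide)
  · exact main_aux 3 1 14 6 ![![0,0,0,1], ![0,1,0,0], ![1,0,0,1], ![0,0,1,1]] coord3 coord1 coord14 coord6 (by rw [Fintype.linearIndependent_iff]; decide)
  · exact main_aux 6 4 2 9 ![![0,0,1,1], ![1,1,0,0], ![0,0,1,0], ![0,1,0,1]] coord6 coord4 coord2 coord9 (by rw [Fintype.linearIndependent_iff]; decide)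
  · exact main_aux 9 7 5 12 ![![0,1,0,1], ![1,1,0,1], ![0,1,1,0], ![1,1,1,1]] coord9 coord7 coord5 coord12 (by rw [Fintype.linearIndependent_iff]; decide)
  · exact main_aux 12 10 8 0 ![![1,1,1,1], ![1,1,1,0], ![1,0,1,0], ![1,0,0,0]] coord12 coord10 coord8 coord0 (by rw [Fintype.linearIndependent_iff]; decide)
end
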